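/- arXiv:2212.06605 — 4 statements merged into one kernel-verified Lean document; each statement's English description precedes it below -/
import Mathlib

section
/- Let A be a random k×d complex matrix whose entries A_{i,j} are independent and identically distributed, each uniform on {1, −1, i, −i} ⊂ ℂ. For x, w ∈ ℝ^d define ρ(x,w) = Re( (1/k) ∑_{i=1}^k ((Ax)_i)² ((Aw)_i)² ), where (Ax)_i = ∑_{j=1}^d A_{i,j} x_j. Then E[ρ(x,w)] = ‖x‖_w² = ∑_{j=1}^d w_j² x_j². -/
open MeasureTheory ProbabilityTheory
open scoped ENNReal

/-- A complex random variable uniform on `{1, -1, i, -i}`. -/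
def IsUniformFourth {Ω : Type*} [MeasurableSpace Ω] (μ : Measure Ω) (Z : Ω → ℂ) : Prop :=
  μ (Z ⁻¹' {1}) = 1 / 4 ∧ μ (Z ⁻¹' {-1}) = 1 / 4 ∧
    μ (Z ⁻¹' {Complex.I}) = 1 / 4 ∧ μ (Z ⁻¹' {-Complex.I}) = 1 / 4

/-- The estimator `ρ(x,w) = Re((1/k) ∑_i ((Ax)_i)² ((Aw)_i)²)`. -/
noncomputable def rho {Ω : Type*} {k d : ℕ} (A : Fin k → Fin d → Ω → ℂ)
    (x w : Fin d → ℝ) (ω : Ω) : ℝ :=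
  ((1 / (k : ℂ)) * ∑ i, (∑ j, A i j ω * (x j : ℂ)) ^ 2 * (∑ j, A i j ω * (w j : ℂ)) ^ 2).re

section Aux

variable {Ω : Type*} [MeasurableSpace Ω] {μ : Measure Ω} [IsProbabilityMeasure μ]

lemma unif_ae {Z : Ω → ℂ} (hZ : Measurable Z) (h : IsUniformFourth μ Z) :
    ∀ᵐ ω ∂μ, Z ω = 1 ∨ Z ω = -1 ∨ Z ω = Complex.I ∨ Z ω = -Complex.I := by
  obtain ⟨h1, h2, h3, h4⟩ := h
  have hne12 : (1 : ℂ) ≠ -1 := by norm_num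
  have hne13 : (1 : ℂ) ≠ Complex.I := by norm_num [Complex.ext_iff]
  have hne14 : (1 : ℂ) ≠ -Complex.I := by norm_num [Complex.ext_iff]
  have hne23 : (-1 : ℂ) ≠ Complex.I := by norm_num [Complex.ext_iff]
  have hne24 : (-1 : ℂ) ≠ -Complex.I := by norm_num [Complex.ext_iff]
  have hne34 : Complex.I ≠ -Complex.I := by norm_num [Complex.ext_iff]
  have hd : ∀ (a b : ℂ), a ≠ b → Disjoint (Z ⁻¹' {a}) (Z ⁻¹' {b}) := fun a b hab =>
    (Set.disjoint_singleton.mpr hab).preimage Z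
  have hm : ∀ a : ℂ, MeasurableSet (Z ⁻¹' {a}) := fun a => hZ (measurableSet_singleton a)
  have hsum : (1:ℝ≥0∞)/4 + 1/4 + 1/4 + 1/4 = 1 := by
    rw [ENNReal.div_add_div_same, ENNReal.div_add_div_same, ENNReal.div_add_div_same]
    norm_num
    exact ENNReal.div_self (by norm_num) (by norm_num)
  have hu : μ (Z ⁻¹' {1} ∪ Z ⁻¹' {-1} ∪ Z ⁻¹' {Complex.I} ∪ Z ⁻¹' {-Complex.I}) = 1 := by
    rw [measure_union (by
        refine Set.disjoint_union_left.2 ⟨Set.disjoint_union_left.2 ⟨?_, ?_⟩, ?_⟩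
        exacts [hd _ _ hne14, hd _ _ hne24, hd _ _ hne34]) (hm _),
      measure_union (by
        refine Set.disjoint_union_left.2 ⟨?_, ?_⟩
        exacts [hd _ _ hne13, hd _ _ hne23]) (hm _),
      measure_union (hd _ _ hne12) (hm _), h1, h2, h3, h4, hsum]
  have hc : μ ((Z ⁻¹' {1} ∪ Z ⁻¹' {-1} ∪ Z ⁻¹' {Complex.I} ∪ Z ⁻¹' {-Complex.I})ᶜ) = 0 := by
    rw [measure_compl ((((hm 1).union (hm _)).union (hm _)).union (hm _)) (measure_ne_top _ _), hu]
    simp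
  rw [ae_iff]
  have hset : {ω | ¬(Z ω = 1 ∨ Z ω = -1 ∨ Z ω = Complex.I ∨ Z ω = -Complex.I)}
      = (Z ⁻¹' {1} ∪ Z ⁻¹' {-1} ∪ Z ⁻¹' {Complex.I} ∪ Z ⁻¹' {-Complex.I})ᶜ := by
    ext ω; simp [not_or]; tauto
  rw [hset]; exact hc

lemma unif_norm_ae {Z : Ω → ℂ}
    (hae : ∀ᵐ ω ∂μ, Z ω = 1 ∨ Z ω = -1 ∨ Z ω = Complex.I ∨ Z ω = -Complex.I) :
    ∀ᵐ ω ∂μ, ‖Z ω‖ = 1 := by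
  filter_upwards [hae] with ω hω
  rcases hω with h | h | h | h <;> simp [h]

lemma unif_moment {Z : Ω → ℂ} (hZ : Measurable Z)
    (h1 : μ (Z ⁻¹' {1}) = 1/4) (h2 : μ (Z ⁻¹' {-1}) = 1/4)
    (h3 : μ (Z ⁻¹' {Complex.I}) = 1/4) (h4 : μ (Z ⁻¹' {-Complex.I}) = 1/4)
    (hae : ∀ᵐ ω ∂μ, Z ω = 1 ∨ Z ω = -1 ∨ Z ω = Complex.I ∨ Z ω = -Complex.I) (m : ℕ) :
    ∫ ω, (Z ω) ^ m ∂μ =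
      (1 + (-1:ℂ) ^ m + Complex.I ^ m + (-Complex.I) ^ m) / 4 := by
  have hm : ∀ a : ℂ, MeasurableSet (Z ⁻¹' {a}) := fun a => hZ (measurableSet_singleton a)
  have hne12 : (1 : ℂ) ≠ -1 := by norm_num
  have hne13 : (1 : ℂ) ≠ Complex.I := by norm_num [Complex.ext_iff]
  have hne14 : (1 : ℂ) ≠ -Complex.I := by norm_num [Complex.ext_iff]
  have hne23 : (-1 : ℂ) ≠ Complex.I := by norm_num [Complex.ext_iff]
  have hne24 : (-1 : ℂ) ≠ -Complex.I := by norm_num [Complex.ext_iff]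
  have hne34 : Complex.I ≠ -Complex.I := by norm_num [Complex.ext_iff]
  set g : Ω → ℂ := fun ω =>
    (Z ⁻¹' {1}).indicator (fun _ => (1:ℂ) ^ m) ω + (Z ⁻¹' {-1}).indicator (fun _ => (-1:ℂ) ^ m) ω
      + (Z ⁻¹' {Complex.I}).indicator (fun _ => Complex.I ^ m) ω
      + (Z ⁻¹' {-Complex.I}).indicator (fun _ => (-Complex.I) ^ m) ω with hg
  have hcongr : (fun ω => (Z ω) ^ m) =ᵐ[μ] g := by
    filter_upwards [hae] with ω hω
    rcases hω with h | h | h | h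
    · simp only [hg]
      rw [Set.indicator_of_mem (by simp [h]), Set.indicator_of_notMem (by simp [h, hne12]),
        Set.indicator_of_notMem (by simp [h, hne13]), Set.indicator_of_notMem (by simp [h, hne14])]
      simp [h]
    · simp only [hg]
      rw [Set.indicator_of_notMem (by simp [h, hne12.symm]), Set.indicator_of_mem (by simp [h]),
        Set.indicator_of_notMem (by simp [h, hne23]), Set.indicator_of_notMem (by simp [h, hne24])]
      simp [h]
    · simp only [hg]
      rw [Set.indicator_of_notMem (by simp [h, hne13.symm]),
        Set.indicator_of_notMem (by simp [h, hne23.symm]), Set.indicator_of_mem (by simp [h]),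
        Set.indicator_of_notMem (by simp [h, hne34])]
      simp [h]
    · simp only [hg]
      rw [Set.indicator_of_notMem (by simp [h, hne14.symm]),
        Set.indicator_of_notMem (by simp [h, hne24.symm]),
        Set.indicator_of_notMem (by simp [h, hne34.symm]), Set.indicator_of_mem (by simp [h])]
      simp [h]
  have hint : ∀ (a : ℂ) (c : ℂ), Integrable ((Z ⁻¹' {a}).indicator (fun _ => c)) μ :=
    fun a c => (integrable_const c).indicator (hm a)
  have htoReal : ((1:ℝ≥0∞)/4).toReal = (1/4 : ℝ) := by simp
  have i1 : Integrable (fun ω => (Z ⁻¹' {1}).indicator (fun _ => (1:ℂ) ^ m) ω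
      + (Z ⁻¹' {-1}).indicator (fun _ => (-1:ℂ) ^ m) ω) μ := (hint _ _).add (hint _ _)
  have i2 : Integrable (fun ω => (Z ⁻¹' {1}).indicator (fun _ => (1:ℂ) ^ m) ω
      + (Z ⁻¹' {-1}).indicator (fun _ => (-1:ℂ) ^ m) ω
      + (Z ⁻¹' {Complex.I}).indicator (fun _ => Complex.I ^ m) ω) μ := i1.add (hint _ _)
  rw [integral_congr_ae hcongr, hg]
  beta_reduce
  rw [integral_add i2 (hint _ _),
    integral_add i1 (hint _ _),
    integral_add (hint _ _) (hint _ _),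
    integral_indicator_const _ (hm _), integral_indicator_const _ (hm _),
    integral_indicator_const _ (hm _), integral_indicator_const _ (hm _),
    measureReal_def, measureReal_def, measureReal_def, measureReal_def,
    h1, h2, h3, h4, htoReal]
  simp only [Complex.real_smul]
  push_cast
  ring

lemma indep_integral_mul_complex {X Y : Ω → ℂ} (h : IndepFun X Y μ)
    (hX : Integrable X μ) (hY : Integrable Y μ) :
    ∫ ω, X ω * Y ω ∂μ = (∫ ω, X ω ∂μ) * ∫ ω, Y ω ∂μ := by
  have hXr : Integrable (fun ω => (X ω).re) μ := hX.re
  have hXi : Integrable (fun ω => (X ω).im) μ := hX.im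
  have hYr : Integrable (fun ω => (Y ω).re) μ := hY.re
  have hYi : Integrable (fun ω => (Y ω).im) μ := hY.im
  have mre : Measurable fun z : ℂ => z.re := Complex.measurable_re
  have mim : Measurable fun z : ℂ => z.im := Complex.measurable_im
  have hrr : IndepFun (fun ω => (X ω).re) (fun ω => (Y ω).re) μ := h.comp mre mre
  have hri : IndepFun (fun ω => (X ω).re) (fun ω => (Y ω).im) μ := h.comp mre mim
  have hir : IndepFun (fun ω => (X ω).im) (fun ω => (Y ω).re) μ := h.comp mim mre
  have hii : IndepFun (fun ω => (X ω).im) (fun ω => (Y ω).im) μ := h.comp mim mim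
  have irr : Integrable (fun ω => (X ω).re * (Y ω).re) μ := hrr.integrable_mul hXr hYr
  have iri : Integrable (fun ω => (X ω).re * (Y ω).im) μ := hri.integrable_mul hXr hYi
  have iir : Integrable (fun ω => (X ω).im * (Y ω).re) μ := hir.integrable_mul hXi hYr
  have iii : Integrable (fun ω => (X ω).im * (Y ω).im) μ := hii.integrable_mul hXi hYi
  have key : ∀ ω, X ω * Y ω =
      (((X ω).re * (Y ω).re - (X ω).im * (Y ω).im : ℝ) : ℂ)
        + (((X ω).re * (Y ω).im + (X ω).im * (Y ω).re : ℝ) : ℂ) * Complex.I := by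
    intro ω
    conv_lhs => rw [← Complex.re_add_im (X ω), ← Complex.re_add_im (Y ω)]
    push_cast
    ring_nf
    rw [Complex.I_sq]
    ring
  have hXeq : ∫ ω, X ω ∂μ =
      ((∫ ω, (X ω).re ∂μ : ℝ) : ℂ) + ((∫ ω, (X ω).im ∂μ : ℝ) : ℂ) * Complex.I := by
    have r : (∫ ω, X ω ∂μ).re = ∫ ω, (X ω).re ∂μ := (integral_re hX).symm
    have i : (∫ ω, X ω ∂μ).im = ∫ ω, (X ω).im ∂μ := (integral_im hX).symm
    apply Complex.ext <;> simp [r, i]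
  have hYeq : ∫ ω, Y ω ∂μ =
      ((∫ ω, (Y ω).re ∂μ : ℝ) : ℂ) + ((∫ ω, (Y ω).im ∂μ : ℝ) : ℂ) * Complex.I := by
    have r : (∫ ω, Y ω ∂μ).re = ∫ ω, (Y ω).re ∂μ := (integral_re hY).symm
    have i : (∫ ω, Y ω ∂μ).im = ∫ ω, (Y ω).im ∂μ := (integral_im hY).symm
    apply Complex.ext <;> simp [r, i]
  calc ∫ ω, X ω * Y ω ∂μ
      = ∫ ω, ((((X ω).re * (Y ω).re - (X ω).im * (Y ω).im : ℝ) : ℂ)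
          + (((X ω).re * (Y ω).im + (X ω).im * (Y ω).re : ℝ) : ℂ) * Complex.I) ∂μ := by
        simp_rw [key]
    _ = ((∫ ω, ((X ω).re * (Y ω).re - (X ω).im * (Y ω).im) ∂μ : ℝ) : ℂ)
          + ((∫ ω, ((X ω).re * (Y ω).im + (X ω).im * (Y ω).re) ∂μ : ℝ) : ℂ) * Complex.I := by
        have j1 : Integrable (fun ω => (((X ω).re * (Y ω).re - (X ω).im * (Y ω).im : ℝ) : ℂ)) μ :=
          (irr.sub iii).ofReal
        have j2 : Integrable
            (fun ω => (((X ω).re * (Y ω).im + (X ω).im * (Y ω).re : ℝ) : ℂ) * Complex.I) μ :=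
          ((iri.add iir).ofReal).mul_const _
        have hOf : ∀ f : Ω → ℝ, ∫ ω, (f ω : ℂ) ∂μ = ((∫ ω, f ω ∂μ : ℝ) : ℂ) :=
          fun f => integral_ofReal
        rw [integral_add j1 j2, integral_mul_const, hOf, hOf]
    _ = _ := by
        rw [integral_sub irr iii, integral_add iri iir,
          hrr.integral_fun_mul_eq_mul_integral hXr.aestronglyMeasurable hYr.aestronglyMeasurable,
          hri.integral_fun_mul_eq_mul_integral hXr.aestronglyMeasurable hYi.aestronglyMeasurable,
          hir.integral_fun_mul_eq_mul_integral hXi.aestronglyMeasurable hYr.aestronglyMeasurable,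
          hii.integral_fun_mul_eq_mul_integral hXi.aestronglyMeasurable hYi.aestronglyMeasurable,
          hXeq, hYeq]
        push_cast
        ring_nf
        rw [Complex.I_sq]
        ring

lemma indep_integral_prod {ι : Type*} {f : ι → Ω → ℂ}
    (hmeas : ∀ i, Measurable (f i))
    (hindep : iIndepFun f μ)
    (hbnd : ∀ i, ∀ᵐ ω ∂μ, ‖f i ω‖ ≤ 1) (s : Finset ι) :
    Integrable (fun ω => ∏ i ∈ s, f i ω) μ ∧
      (∫ ω, ∏ i ∈ s, f i ω ∂μ) = ∏ i ∈ s, ∫ ω, f i ω ∂μ := by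
  classical
  have hint : ∀ i, Integrable (f i) μ := by
    intro i
    refine Integrable.mono' (integrable_const (1:ℝ)) (hmeas i).aestronglyMeasurable ?_
    exact hbnd i
  induction s using Finset.induction_on with
  | empty => simp
  | insert a s ha ih =>
    have h1 : IndepFun (fun ω => ∏ i ∈ s, f i ω) (f a) μ := by
      have h2 := hindep.indepFun_finsetProd_of_notMem hmeas ha
      rwa [show (∏ j ∈ s, f j) = fun ω => ∏ j ∈ s, f j ω from
        funext fun ω => Finset.prod_apply ω s f] at h2
    have h3 : (∫ ω, f a ω * ∏ i ∈ s, f i ω ∂μ)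
        = (∫ ω, f a ω ∂μ) * ∫ ω, ∏ i ∈ s, f i ω ∂μ :=
      indep_integral_mul_complex h1.symm (hint a) ih.1
    constructor
    · have h4 : Integrable ((fun ω => f a ω) * (fun ω => ∏ i ∈ s, f i ω)) μ :=
        IndepFun.integrable_mul h1.symm (hint a) ih.1
      have h5 : ((fun ω => f a ω) * (fun ω => ∏ i ∈ s, f i ω))
          = fun ω => ∏ i ∈ insert a s, f i ω := by
        funext ω
        simp [Finset.prod_insert ha]
      rwa [h5] at h4
    · rw [show (fun ω => ∏ i ∈ insert a s, f i ω) = fun ω => f a ω * ∏ i ∈ s, f i ω from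
        funext fun ω => Finset.prod_insert ha, Finset.prod_insert ha, h3, ih.2]

lemma indep_integral_monomial {ι : Type*} [Fintype ι] [DecidableEq ι] {f : ι → Ω → ℂ}
    (hmeas : ∀ i, Measurable (f i))
    (hindep : iIndepFun f μ)
    (hbnd : ∀ i, ∀ᵐ ω ∂μ, ‖f i ω‖ ≤ 1)
    (hmom : ∀ i (m : ℕ), 1 ≤ m → m ≤ 3 → ∫ ω, (f i ω) ^ m ∂μ = 0)
    (hmom4 : ∀ i, ∫ ω, (f i ω) ^ 4 ∂μ = 1)
    (p1 p2 p3 p4 : ι) :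
    ∫ ω, f p1 ω * f p2 ω * f p3 ω * f p4 ω ∂μ
      = if p1 = p2 ∧ p1 = p3 ∧ p1 = p4 then 1 else 0 := by
  classical
  set m : ι → ℕ := fun p => (if p = p1 then 1 else 0) + (if p = p2 then 1 else 0)
    + (if p = p3 then 1 else 0) + (if p = p4 then 1 else 0) with hm
  have single : ∀ q : ι, ∀ ω, (∏ p, (f p ω) ^ (if p = q then 1 else 0)) = f q ω := by
    intro q ω
    simp only [pow_ite, pow_one, pow_zero]
    rw [Finset.prod_ite_eq' Finset.univ q (fun p => f p ω)]
    simp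
  have claim1 : ∀ ω, f p1 ω * f p2 ω * f p3 ω * f p4 ω = ∏ p, (f p ω) ^ (m p) := by
    intro ω
    simp only [hm, pow_add, Finset.prod_mul_distrib, single]
  have hgmeas : ∀ p, Measurable (fun ω => (f p ω) ^ (m p)) := fun p => (hmeas p).pow_const _
  have hgindep : iIndepFun (fun p ω => (f p ω) ^ (m p)) μ :=
    hindep.comp (fun p z => z ^ (m p)) (fun p => measurable_id.pow_const _)
  have hgbnd : ∀ p, ∀ᵐ ω ∂μ, ‖(f p ω) ^ (m p)‖ ≤ 1 := by
    intro p
    filter_upwards [hbnd p] with ω hω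
    rw [norm_pow]
    exact pow_le_one₀ (norm_nonneg _) hω
  have hfact := (indep_integral_prod hgmeas hgindep hgbnd Finset.univ).2
  have step : ∫ ω, f p1 ω * f p2 ω * f p3 ω * f p4 ω ∂μ = ∏ p, ∫ ω, (f p ω) ^ (m p) ∂μ := by
    rw [show (fun ω => f p1 ω * f p2 ω * f p3 ω * f p4 ω)
      = fun ω => ∏ p, (f p ω) ^ (m p) from funext claim1]
    exact hfact
  rw [step]
  by_cases hall : p1 = p2 ∧ p1 = p3 ∧ p1 = p4
  · rw [if_pos hall]
    obtain ⟨h2, h3, h4⟩ := hall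
    subst h2; subst h3; subst h4
    apply Finset.prod_eq_one
    intro p _
    by_cases hp : p = p1
    · subst hp
      have hmp : m p = 4 := by simp [hm]
      rw [hmp]; exact hmom4 p
    · have hmp : m p = 0 := by simp [hm, hp]
      rw [hmp]; simp
  · rw [if_neg hall]
    have h1le : 1 ≤ m p1 := by
      simp only [hm, if_pos rfl]
      split_ifs <;> omega
    have h3le : m p1 ≤ 3 := by
      simp only [hm, if_pos rfl]
      split_ifs <;>
        first
          | omega
          | exact absurd ⟨by assumption, by assumption, by assumption⟩ hall
    exact Finset.prod_eq_zero (Finset.mem_univ p1) (hmom p1 (m p1) h1le h3le)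

end Aux

/-- `E[ρ(x,w)] = ‖x‖_w² = ∑_j w_j² x_j²` for a random `k×d` matrix `A` with
i.i.d. entries uniform on `{1, -1, i, -i}`. -/
theorem stmt_5 (Ω : Type*) [MeasurableSpace Ω] (μ : Measure Ω) [IsProbabilityMeasure μ]
    (k d : ℕ) (hk : 0 < k)
    (A : Fin k → Fin d → Ω → ℂ)
    (hmeas : ∀ i j, Measurable (A i j))
    (hunif : ∀ i j, IsUniformFourth μ (A i j))
    (hindep : iIndepFun (fun p : Fin k × Fin d => A p.1 p.2) μ)
    (x w : Fin d → ℝ) :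
    (∫ ω, rho A x w ω ∂μ) = ∑ j, (w j) ^ 2 * (x j) ^ 2 := by
  classical
  set f : (Fin k × Fin d) → Ω → ℂ := fun p => A p.1 p.2 with hf
  have hfm : ∀ p, Measurable (f p) := fun p => hmeas p.1 p.2
  have hae : ∀ p, ∀ᵐ ω ∂μ, f p ω = 1 ∨ f p ω = -1 ∨ f p ω = Complex.I ∨ f p ω = -Complex.I :=
    fun p => unif_ae (hfm p) (hunif p.1 p.2)
  have hbnd : ∀ p, ∀ᵐ ω ∂μ, ‖f p ω‖ ≤ 1 := by
    intro p
    filter_upwards [unif_norm_ae (hae p)] with ω h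
    exact le_of_eq h
  have hmomf : ∀ p (m : ℕ), ∫ ω, (f p ω) ^ m ∂μ
      = (1 + (-1:ℂ) ^ m + Complex.I ^ m + (-Complex.I) ^ m) / 4 := fun p m =>
    unif_moment (hfm p) (hunif p.1 p.2).1 (hunif p.1 p.2).2.1 (hunif p.1 p.2).2.2.1
      (hunif p.1 p.2).2.2.2 (hae p) m
  have hmom : ∀ p (m : ℕ), 1 ≤ m → m ≤ 3 → ∫ ω, (f p ω) ^ m ∂μ = 0 := by
    intro p m h1 h3
    rw [hmomf]
    interval_cases m <;> norm_num [pow_succ, Complex.I_mul_I]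
  have hmom4 : ∀ p, ∫ ω, (f p ω) ^ 4 ∂μ = 1 := by
    intro p
    rw [hmomf]
    norm_num [pow_succ, Complex.I_mul_I]
  have hmono := indep_integral_monomial hfm hindep hbnd hmom hmom4
  have hintmono : ∀ p1 p2 p3 p4 : Fin k × Fin d,
      Integrable (fun ω => f p1 ω * f p2 ω * f p3 ω * f p4 ω) μ := by
    intro p1 p2 p3 p4
    refine Integrable.mono' (integrable_const (1:ℝ))
      ((((hfm p1).mul (hfm p2)).mul (hfm p3)).mul (hfm p4)).aestronglyMeasurable ?_
    filter_upwards [hbnd p1, hbnd p2, hbnd p3, hbnd p4] with ω h1 h2 h3 h4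
    rw [norm_mul, norm_mul, norm_mul]
    exact mul_le_one₀ (mul_le_one₀ (mul_le_one₀ h1 (norm_nonneg _) h2) (norm_nonneg _) h3)
      (norm_nonneg _) h4
  -- pointwise expansion
  have hexp : ∀ (i : Fin k) (ω : Ω),
      (∑ j, A i j ω * (x j : ℂ)) ^ 2 * (∑ j, A i j ω * (w j : ℂ)) ^ 2
        = ∑ a, ∑ b, ∑ c, ∑ e, ((x e : ℂ) * x c * w b * w a)
            * (f (i,e) ω * f (i,c) ω * f (i,b) ω * f (i,a) ω) := by
    intro i ω
    rw [sq, sq]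
    simp only [hf, Finset.sum_mul, Finset.mul_sum]
    refine Finset.sum_congr rfl fun a _ => ?_
    refine Finset.sum_congr rfl fun b _ => ?_
    refine Finset.sum_congr rfl fun c _ => ?_
    refine Finset.sum_congr rfl fun e _ => ?_
    ring
  have hintT : ∀ (i : Fin k), Integrable (fun ω => ∑ a, ∑ b, ∑ c, ∑ e,
      ((x e : ℂ) * x c * w b * w a)
        * (f (i,e) ω * f (i,c) ω * f (i,b) ω * f (i,a) ω)) μ := by
    intro i
    apply integrable_finset_sum; intro a _
    apply integrable_finset_sum; intro b _
    apply integrable_finset_sum; intro c _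
    apply integrable_finset_sum; intro e _
    exact (hintmono _ _ _ _).const_mul _
  have flatten : ∀ (g : Fin d → Fin d → Fin d → Fin d → ℂ),
      (∑ q : Fin d × Fin d × Fin d × Fin d, g q.1 q.2.1 q.2.2.1 q.2.2.2)
        = ∑ a, ∑ b, ∑ c, ∑ e, g a b c e := by
    intro g
    simp [Fintype.sum_prod_type]
  have hTval : ∀ i : Fin k, (∫ ω, ∑ a, ∑ b, ∑ c, ∑ e, ((x e : ℂ) * x c * w b * w a)
      * (f (i,e) ω * f (i,c) ω * f (i,b) ω * f (i,a) ω) ∂μ)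
        = ∑ j, (x j : ℂ) ^ 2 * (w j : ℂ) ^ 2 := by
    intro i
    rw [show (fun ω => ∑ a, ∑ b, ∑ c, ∑ e, ((x e : ℂ) * x c * w b * w a)
          * (f (i,e) ω * f (i,c) ω * f (i,b) ω * f (i,a) ω))
        = fun ω => ∑ q : Fin d × Fin d × Fin d × Fin d,
            ((x q.2.2.2 : ℂ) * x q.2.2.1 * w q.2.1 * w q.1)
              * (f (i,q.2.2.2) ω * f (i,q.2.2.1) ω * f (i,q.2.1) ω * f (i,q.1) ω) from
      funext fun ω => (flatten fun a b c e => ((x e : ℂ) * x c * w b * w a)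
          * (f (i,e) ω * f (i,c) ω * f (i,b) ω * f (i,a) ω)).symm]
    rw [integral_finset_sum _ (fun q _ => (hintmono _ _ _ _).const_mul _)]
    trans (∑ q : Fin d × Fin d × Fin d × Fin d,
      ((x q.2.2.2 : ℂ) * x q.2.2.1 * w q.2.1 * w q.1)
        * (if (i,q.2.2.2) = (i,q.2.2.1) ∧ (i,q.2.2.2) = (i,q.2.1) ∧ (i,q.2.2.2) = (i,q.1)
          then 1 else 0))
    · exact Finset.sum_congr rfl fun q _ => by rw [integral_const_mul, hmono]
    · rw [flatten fun a b c e => ((x e : ℂ) * x c * w b * w a)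
        * (if (i,e) = (i,c) ∧ (i,e) = (i,b) ∧ (i,e) = (i,a) then 1 else 0)]
      simp only [Prod.mk.injEq, true_and]
      simp only [ite_and]
      simp only [mul_ite, ite_mul, mul_zero, zero_mul, mul_one, one_mul,
        Finset.sum_ite_eq', Finset.sum_ite_eq, Finset.mem_univ, if_true]
      refine Finset.sum_congr rfl fun a _ => by ring
  have hrho : ∀ ω : Ω, rho A x w ω
      = ((1/(k:ℂ)) * ∑ i, ∑ a, ∑ b, ∑ c, ∑ e, ((x e : ℂ) * x c * w b * w a)
          * (f (i,e) ω * f (i,c) ω * f (i,b) ω * f (i,a) ω)).re := by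
    intro ω
    unfold rho
    rw [Finset.sum_congr rfl fun i _ => hexp i ω]
  have hGint : Integrable (fun ω => (1/(k:ℂ)) * ∑ i, ∑ a, ∑ b, ∑ c, ∑ e,
      ((x e : ℂ) * x c * w b * w a)
        * (f (i,e) ω * f (i,c) ω * f (i,b) ω * f (i,a) ω)) μ :=
    (integrable_finset_sum _ fun i _ => hintT i).const_mul _
  have hre : (∫ ω, ((1/(k:ℂ)) * ∑ i, ∑ a, ∑ b, ∑ c, ∑ e, ((x e : ℂ) * x c * w b * w a)
      * (f (i,e) ω * f (i,c) ω * f (i,b) ω * f (i,a) ω)).re ∂μ)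
        = (∫ ω, (1/(k:ℂ)) * ∑ i, ∑ a, ∑ b, ∑ c, ∑ e, ((x e : ℂ) * x c * w b * w a)
          * (f (i,e) ω * f (i,c) ω * f (i,b) ω * f (i,a) ω) ∂μ).re :=
    integral_re hGint
  have hGval : (∫ ω, (1/(k:ℂ)) * ∑ i, ∑ a, ∑ b, ∑ c, ∑ e, ((x e : ℂ) * x c * w b * w a)
      * (f (i,e) ω * f (i,c) ω * f (i,b) ω * f (i,a) ω) ∂μ)
        = ∑ j, (x j : ℂ) ^ 2 * (w j : ℂ) ^ 2 := by
    rw [integral_const_mul, integral_finset_sum _ (fun i _ => hintT i),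
      Finset.sum_congr rfl fun i _ => hTval i, Finset.sum_const, Finset.card_univ,
      Fintype.card_fin, nsmul_eq_mul]
    have hk' : (k:ℂ) ≠ 0 := Nat.cast_ne_zero.2 hk.ne'
    field_simp
  calc ∫ ω, rho A x w ω ∂μ
      = ∫ ω, ((1/(k:ℂ)) * ∑ i, ∑ a, ∑ b, ∑ c, ∑ e, ((x e : ℂ) * x c * w b * w a)
          * (f (i,e) ω * f (i,c) ω * f (i,b) ω * f (i,a) ω)).re ∂μ := by
        exact integral_congr_ae (Filter.Eventually.of_forall hrho)
    _ = (∑ j, (x j : ℂ) ^ 2 * (w j : ℂ) ^ 2).re := by rw [hre, hGval]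
    _ = ∑ j, (w j) ^ 2 * (x j) ^ 2 := by
        rw [show (∑ j, (x j : ℂ) ^ 2 * (w j : ℂ) ^ 2)
            = ((∑ j, (w j) ^ 2 * (x j) ^ 2 : ℝ) : ℂ) by
          push_cast
          exact Finset.sum_congr rfl fun j _ => by ring]
        exact Complex.ofReal_re _
end

section
/- There exists a universal constant C > 0 such that the following holds. Let A be a random k×d complex matrix whose entries A_{i,j} are independent and identically distributed, each uniform on {1, −1, i, −i} ⊂ ℂ. Let x, w ∈ ℝ^d and define H_4 = ∑_{i=1}^k ∑_{(j_1,j_2)∈I'_{2,d}} Re( A_{i,j_1}² A_{i,j_2}² ) · ( w_{j_1}² x_{j_2}² + 2 x_{j_1} w_{j_1} x_{j_2} w_{j_2} ). Then for every t > 0: P[ |H_4| > t ] ≤ C · exp( −t² / (16 k ‖w‖₂⁴ ‖x‖₂⁴) ). -/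
open MeasureTheory ProbabilityTheory

/-- The term `H₄`, a sum over pairs of distinct indices. -/
noncomputable def Hfour {Ω : Type*} {k d : ℕ} (A : Fin k → Fin d → Ω → ℂ)
    (x w : Fin d → ℝ) (ω : Ω) : ℝ :=
  ∑ i : Fin k, ∑ j₁ : Fin d, ∑ j₂ : Fin d,
    if j₁ ≠ j₂ then
      ((A i j₁ ω) ^ 2 * (A i j₂ ω) ^ 2).re *
        ((w j₁) ^ 2 * (x j₂) ^ 2 + 2 * x j₁ * w j₁ * x j₂ * w j₂)
    else 0


open scoped ENNReal


lemma hoeff_kernel (p : ℝ) (hp0 : 0 ≤ p) (hp1 : p ≤ 1) (h : ℝ) :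
    1 - p + p * Real.exp h ≤ Real.exp (p * h + h ^ 2 / 4) := by
  set f : ℝ → ℝ := fun y => 1 - p + p * Real.exp y with hf_def
  have hfpos : ∀ y, 0 < f y := by
    intro y
    rcases eq_or_lt_of_le hp1 with rfl | hp1'
    · simpa [hf_def] using Real.exp_pos y
    · have : 0 ≤ p * Real.exp y := mul_nonneg hp0 (Real.exp_pos y).le
      simp only [hf_def]; nlinarith
  have hf' : ∀ y, HasDerivAt f (p * Real.exp y) y := by
    intro y
    simpa [hf_def] using (hasDerivAt_const y (1 - p)).fun_add ((Real.hasDerivAt_exp y).const_mul p)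
  set D : ℝ → ℝ := fun y => p * y + y ^ 2 / 4 - Real.log (f y) with hD_def
  set D' : ℝ → ℝ := fun y => p + y / 2 - p * Real.exp y / f y with hD'_def
  have hD' : ∀ y, HasDerivAt D (D' y) y := by
    intro y
    have h1 : HasDerivAt (fun y : ℝ => p * y + y ^ 2 / 4) (p + y * 2 / 4 * 1) y := by
      have := ((hasDerivAt_id y).const_mul p).fun_add
        (((hasDerivAt_pow 2 y).div_const 4))
      simpa [mul_comm] using this
      -- (p*1) + (2 * y^1 /4)
    have h2 : HasDerivAt (fun y => Real.log (f y)) (p * Real.exp y / f y) y :=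
      (hf' y).log (hfpos y).ne'
    have := h1.fun_sub h2
    refine this.congr_deriv ?_
    show _ = p + y / 2 - p * Real.exp y / f y
    ring
  have hD'' : ∀ y, HasDerivAt D'
      (1 / 2 - (p * Real.exp y * f y - p * Real.exp y * (p * Real.exp y)) / (f y) ^ 2) y := by
    intro y
    have h1 : HasDerivAt (fun y : ℝ => p + y / 2) (1 / 2) y := by
      simpa using (hasDerivAt_const y p).fun_add ((hasDerivAt_id y).div_const 2)
    have h2 : HasDerivAt (fun y => p * Real.exp y / f y)
        ((p * Real.exp y * f y - p * Real.exp y * (p * Real.exp y)) / (f y) ^ 2) y := by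
      exact ((Real.hasDerivAt_exp y).const_mul p).div (hf' y) (hfpos y).ne'
    simpa using h1.fun_sub h2
  have hD''nonneg : ∀ y, 0 ≤ 1 / 2 -
      (p * Real.exp y * f y - p * Real.exp y * (p * Real.exp y)) / (f y) ^ 2 := by
    intro y
    rw [sub_nonneg, div_le_iff₀ (pow_pos (hfpos y) 2)]
    nlinarith [sq_nonneg (f y - p * Real.exp y), sq_nonneg (p * Real.exp y)]
  have hD'mono : Monotone D' := by
    have hdiff : Differentiable ℝ D' := fun y => (hD'' y).differentiableAt
    refine monotone_of_deriv_nonneg hdiff ?_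
    intro y
    rw [(hD'' y).deriv]
    exact hD''nonneg y
  have hD'0 : D' 0 = 0 := by
    simp [hD'_def, hf_def]
  have hDnonneg : ∀ y, 0 ≤ D y := by
    have hdiffD : Differentiable ℝ D := fun y => (hD' y).differentiableAt
    have hderivD : ∀ y, deriv D y = D' y := fun y => (hD' y).deriv
    intro y
    have hD0 : D 0 = 0 := by simp [hD_def, hf_def]
    rcases le_or_gt 0 y with hy | hy
    · have hmono : MonotoneOn D (Set.Ici (0:ℝ)) := by
        refine monotoneOn_of_deriv_nonneg (convex_Ici 0) hdiffD.continuous.continuousOn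
          (hdiffD.differentiableOn) ?_
        intro z hz
        rw [hderivD]
        have : (0:ℝ) ≤ z := le_of_lt (by simpa using hz)
        have := hD'mono this
        rwa [hD'0] at this
      have := hmono (Set.mem_Ici.mpr le_rfl) (Set.mem_Ici.mpr hy) hy
      rwa [hD0] at this
    · have hanti : AntitoneOn D (Set.Iic (0:ℝ)) := by
        refine antitoneOn_of_deriv_nonpos (convex_Iic 0) hdiffD.continuous.continuousOn
          (hdiffD.differentiableOn) ?_
        intro z hz
        rw [hderivD]
        have hz' : z ≤ (0:ℝ) := le_of_lt (by simpa using hz)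
        have := hD'mono hz'
        rwa [hD'0] at this
      have := hanti (Set.mem_Iic.mpr hy.le) (Set.mem_Iic.mpr le_rfl) hy.le
      rwa [hD0] at this
  have hlog : Real.log (f h) ≤ p * h + h ^ 2 / 4 := by
    have := hDnonneg h
    simp only [hD_def] at this
    linarith
  calc f h = Real.exp (Real.log (f h)) := (Real.exp_log (hfpos h)).symm
    _ ≤ Real.exp (p * h + h ^ 2 / 4) := Real.exp_le_exp.mpr hlog

lemma chord_bound (a b l : ℝ) (ha : a ≤ 0) (hb : 0 ≤ b) (hR : 0 < b - a) :
    (b * Real.exp (l * a) - a * Real.exp (l * b)) / (b - a) ≤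
      Real.exp (l ^ 2 * (b - a) ^ 2 / 4) := by
  set R := b - a with hRdef
  set p := -a / R with hpdef
  have hp0 : 0 ≤ p := div_nonneg (neg_nonneg.mpr ha) hR.le
  have hp1 : p ≤ 1 := by
    rw [hpdef, div_le_one hR]; linarith
  have h1p : 1 - p = b / R := by
    have hRne : R ≠ 0 := hR.ne'
    have hpR : p * R = -a := by rw [hpdef, div_mul_cancel₀ _ hRne]
    rw [eq_div_iff hRne]; linear_combination -hpR + hRdef
  have hla : l * a = -(p * (l * R)) := by
    have hRne : R ≠ 0 := hR.ne'
    have hpR : p * R = -a := by rw [hpdef, div_mul_cancel₀ _ hRne]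
    linear_combination l * hpR
  have hlb : l * b = (1 - p) * (l * R) := by
    rw [h1p]; field_simp
  have key := hoeff_kernel p hp0 hp1 (l * R)
  have hexp : (b * Real.exp (l * a) - a * Real.exp (l * b)) / R
      = Real.exp (-(p * (l * R))) * (1 - p + p * Real.exp (l * R)) := by
    rw [mul_add]
    have e1 : Real.exp (-(p * (l * R))) * (1 - p) = b / R * Real.exp (l * a) := by
      rw [← hla, ← h1p]; ring
    have e2 : Real.exp (-(p * (l * R))) * (p * Real.exp (l * R)) = -a / R * Real.exp (l * b) := by
      rw [← hpdef]
      have : Real.exp (-(p * (l * R))) * Real.exp (l * R) = Real.exp (l * b) := by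
        rw [← Real.exp_add, hlb]; ring_nf
      calc Real.exp (-(p * (l * R))) * (p * Real.exp (l * R))
          = p * (Real.exp (-(p * (l * R))) * Real.exp (l * R)) := by ring
        _ = p * Real.exp (l * b) := by rw [this]
        _ = -a / R * Real.exp (l * b) := by rw [hpdef]
    rw [e1, e2]
    ring
  rw [hexp]
  calc Real.exp (-(p * (l * R))) * (1 - p + p * Real.exp (l * R))
      ≤ Real.exp (-(p * (l * R))) * Real.exp (p * (l * R) + (l * R) ^ 2 / 4) := by
        exact mul_le_mul_of_nonneg_left key (Real.exp_pos _).le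
    _ = Real.exp ((l * R) ^ 2 / 4) := by rw [← Real.exp_add]; ring_nf
    _ = Real.exp (l ^ 2 * R ^ 2 / 4) := by ring_nf


/-- Row value written via sign variables. -/
noncomputable def rowVal {d : ℕ} (x w : Fin d → ℝ) (e : Fin d → ℝ) : ℝ :=
  ∑ j₁ : Fin d, ∑ j₂ : Fin d,
    if j₁ ≠ j₂ then
      (e j₁ * e j₂) * ((w j₁) ^ 2 * (x j₂) ^ 2 + 2 * x j₁ * w j₁ * x j₂ * w j₂)
    else 0

lemma rowVal_eq {d : ℕ} (x w e : Fin d → ℝ) (he : ∀ j, e j ^ 2 = 1) :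
    rowVal x w e = (∑ j, e j * (w j) ^ 2) * (∑ j, e j * (x j) ^ 2)
      + 2 * (∑ j, e j * (x j * w j)) ^ 2 - 3 * ∑ j, (x j) ^ 2 * (w j) ^ 2 := by
  classical
  set g : Fin d → Fin d → ℝ := fun j₁ j₂ =>
    (e j₁ * e j₂) * ((w j₁) ^ 2 * (x j₂) ^ 2 + 2 * x j₁ * w j₁ * x j₂ * w j₂) with hg
  have hsplit : ∀ j₁, ∑ j₂ : Fin d, (if j₁ ≠ j₂ then g j₁ j₂ else 0)
      = (∑ j₂ : Fin d, g j₁ j₂) - g j₁ j₁ := by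
    intro j₁
    have : ∀ j₂, (if j₁ ≠ j₂ then g j₁ j₂ else 0)
        = g j₁ j₂ - (if j₁ = j₂ then g j₁ j₂ else 0) := by
      intro j₂; by_cases h : j₁ = j₂ <;> simp [h]
    rw [Finset.sum_congr rfl (fun j₂ _ => this j₂), Finset.sum_sub_distrib,
      Finset.sum_ite_eq Finset.univ j₁ (g j₁)]
    simp
  have hfull : ∑ j₁ : Fin d, ∑ j₂ : Fin d, g j₁ j₂
      = (∑ j, e j * (w j) ^ 2) * (∑ j, e j * (x j) ^ 2)
        + 2 * (∑ j, e j * (x j * w j)) ^ 2 := by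
    have expand : ∀ j₁ j₂, g j₁ j₂ = (e j₁ * (w j₁) ^ 2) * (e j₂ * (x j₂) ^ 2)
        + 2 * ((e j₁ * (x j₁ * w j₁)) * (e j₂ * (x j₂ * w j₂))) := by
      intro j₁ j₂; simp only [hg]; ring
    have e1 : ∑ j₁ : Fin d, ∑ j₂ : Fin d, g j₁ j₂
        = (∑ j₁ : Fin d, ∑ j₂ : Fin d, (e j₁ * (w j₁) ^ 2) * (e j₂ * (x j₂) ^ 2))
          + 2 * ∑ j₁ : Fin d, ∑ j₂ : Fin d,
              (e j₁ * (x j₁ * w j₁)) * (e j₂ * (x j₂ * w j₂)) := by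
      rw [Finset.mul_sum, ← Finset.sum_add_distrib]
      refine Finset.sum_congr rfl fun j₁ _ => ?_
      rw [Finset.mul_sum, ← Finset.sum_add_distrib]
      refine Finset.sum_congr rfl fun j₂ _ => ?_
      exact (expand j₁ j₂).trans (by ring)
    rw [e1, ← Finset.sum_mul_sum, ← Finset.sum_mul_sum, sq]
  have hdiag : ∑ j₁ : Fin d, g j₁ j₁ = 3 * ∑ j, (x j) ^ 2 * (w j) ^ 2 := by
    rw [Finset.mul_sum]
    refine Finset.sum_congr rfl fun j _ => ?_
    have h1 : e j * e j = 1 := by nlinarith [he j]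
    simp only [hg]
    rw [h1]
    ring
  calc rowVal x w e = ∑ j₁ : Fin d, ((∑ j₂ : Fin d, g j₁ j₂) - g j₁ j₁) := by
        exact Finset.sum_congr rfl fun j₁ _ => hsplit j₁
    _ = (∑ j₁ : Fin d, ∑ j₂ : Fin d, g j₁ j₂) - ∑ j₁ : Fin d, g j₁ j₁ :=
        Finset.sum_sub_distrib _ _
    _ = _ := by rw [hfull, hdiag]

lemma rowVal_bounds {d : ℕ} (x w e : Fin d → ℝ) (he : ∀ j, e j = 1 ∨ e j = -1) :
    -((∑ j, (x j) ^ 2) * (∑ j, (w j) ^ 2)) - 3 * (∑ j, (x j) ^ 2 * (w j) ^ 2) ≤ rowVal x w e ∧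
    rowVal x w e ≤ 3 * ((∑ j, (x j) ^ 2) * (∑ j, (w j) ^ 2)) - 3 * (∑ j, (x j) ^ 2 * (w j) ^ 2) := by
  have he2 : ∀ j, e j ^ 2 = 1 := by
    intro j; rcases he j with h | h <;> rw [h] <;> norm_num
  have habs : ∀ j, |e j| = 1 := by
    intro j; rcases he j with h | h <;> rw [h] <;> norm_num
  rw [rowVal_eq x w e he2]
  set P := ∑ j, e j * (w j) ^ 2 with hP
  set Q := ∑ j, e j * (x j) ^ 2 with hQ
  set S := ∑ j, e j * (x j * w j) with hS
  set X := ∑ j, (x j) ^ 2 with hX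
  set W := ∑ j, (w j) ^ 2 with hW
  have hXnn : 0 ≤ X := Finset.sum_nonneg fun j _ => sq_nonneg _
  have hWnn : 0 ≤ W := Finset.sum_nonneg fun j _ => sq_nonneg _
  have hPabs : |P| ≤ W := by
    calc |P| ≤ ∑ j, |e j * (w j) ^ 2| := Finset.abs_sum_le_sum_abs _ _
      _ = W := by
        refine Finset.sum_congr rfl fun j _ => ?_
        rw [abs_mul, habs j, one_mul, abs_of_nonneg (sq_nonneg _)]
  have hQabs : |Q| ≤ X := by
    calc |Q| ≤ ∑ j, |e j * (x j) ^ 2| := Finset.abs_sum_le_sum_abs _ _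
      _ = X := by
        refine Finset.sum_congr rfl fun j _ => ?_
        rw [abs_mul, habs j, one_mul, abs_of_nonneg (sq_nonneg _)]
  have hS2 : S ^ 2 ≤ X * W := by
    have := Finset.sum_mul_sq_le_sq_mul_sq Finset.univ (fun j => e j * x j) w
    have heq : ∀ j, e j * x j * w j = e j * (x j * w j) := fun j => by ring
    have heq2 : ∀ j, (e j * x j) ^ 2 = (x j) ^ 2 := by
      intro j; rw [mul_pow, he2 j, one_mul]
    calc S ^ 2 = (∑ j, e j * x j * w j) ^ 2 := by
          rw [hS]; congr 1; exact Finset.sum_congr rfl fun j _ => (heq j).symm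
      _ ≤ (∑ j, (e j * x j) ^ 2) * (∑ j, (w j) ^ 2) := this
      _ = X * W := by
          rw [hX, hW]; congr 1; exact Finset.sum_congr rfl fun j _ => heq2 j
  have hPQ : |P * Q| ≤ X * W := by
    rw [abs_mul]
    calc |P| * |Q| ≤ W * X := mul_le_mul hPabs hQabs (abs_nonneg _) hWnn
      _ = X * W := mul_comm _ _
  have h1 : -(X * W) ≤ P * Q := neg_le_of_abs_le hPQ
  have h2 : P * Q ≤ X * W := le_of_abs_le hPQ
  have hS2nn : 0 ≤ S ^ 2 := sq_nonneg _
  constructor <;> nlinarith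

lemma T_le {d : ℕ} (x w : Fin d → ℝ) :
    ∑ j, (x j) ^ 2 * (w j) ^ 2 ≤ (∑ j, (x j) ^ 2) * (∑ j, (w j) ^ 2) := by
  rw [Finset.sum_mul_sum]
  calc ∑ j, (x j) ^ 2 * (w j) ^ 2
      ≤ ∑ j₁, ∑ j₂, if j₁ = j₂ then (x j₁) ^ 2 * (w j₂) ^ 2 else 0 := by
        refine le_of_eq (Finset.sum_congr rfl fun j _ => ?_).symm
        rw [Finset.sum_ite_eq Finset.univ j (fun j₂ => (x j) ^ 2 * (w j₂) ^ 2)]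
        simp
    _ ≤ ∑ j₁, ∑ j₂, (x j₁) ^ 2 * (w j₂) ^ 2 := by
        refine Finset.sum_le_sum fun j₁ _ => Finset.sum_le_sum fun j₂ _ => ?_
        split
        · exact le_rfl
        · positivity


lemma cvals : (1:ℂ) ≠ -1 ∧ (1:ℂ) ≠ Complex.I ∧ (1:ℂ) ≠ -Complex.I ∧
    (-1:ℂ) ≠ Complex.I ∧ (-1:ℂ) ≠ -Complex.I ∧ Complex.I ≠ -Complex.I := by
  refine ⟨?_, ?_, ?_, ?_, ?_, ?_⟩ <;> intro hcon <;> rw [Complex.ext_iff] at hcon <;>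
    simp only [Complex.one_re, Complex.one_im, Complex.I_re, Complex.I_im, Complex.neg_re,
      Complex.neg_im, Complex.one_re] at hcon <;> norm_num at hcon

lemma fourpt_ae {Ω : Type*} [MeasurableSpace Ω] (μ : Measure Ω) [IsProbabilityMeasure μ]
    (Z : Ω → ℂ) (hZ : Measurable Z) (hu : IsUniformFourth μ Z) :
    ∀ᵐ ω ∂μ, Z ω = 1 ∨ Z ω = -1 ∨ Z ω = Complex.I ∨ Z ω = -Complex.I := by
  obtain ⟨h1, h2, h3, h4⟩ := hu
  obtain ⟨ne12, ne13, ne14, ne23, ne24, ne34⟩ := cvals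
  set s1 := Z ⁻¹' {1}; set s2 := Z ⁻¹' {-1}
  set s3 := Z ⁻¹' {Complex.I}; set s4 := Z ⁻¹' {-Complex.I}
  have hm1 : MeasurableSet s1 := hZ (measurableSet_singleton _)
  have hm2 : MeasurableSet s2 := hZ (measurableSet_singleton _)
  have hm3 : MeasurableSet s3 := hZ (measurableSet_singleton _)
  have hm4 : MeasurableSet s4 := hZ (measurableSet_singleton _)
  have hd34 : Disjoint s3 s4 :=
    Disjoint.preimage Z (Set.disjoint_singleton.mpr ne34)
  have hd234 : Disjoint s2 (s3 ∪ s4) := by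
    refine Disjoint.union_right ?_ ?_ <;>
      exact Disjoint.preimage Z (Set.disjoint_singleton.mpr (by assumption))
  have hd1234 : Disjoint s1 (s2 ∪ (s3 ∪ s4)) := by
    refine Disjoint.union_right ?_ (Disjoint.union_right ?_ ?_) <;>
      exact Disjoint.preimage Z (Set.disjoint_singleton.mpr (by assumption))
  have hmeasU : μ (s1 ∪ (s2 ∪ (s3 ∪ s4))) = 1 := by
    rw [measure_union hd1234 (hm2.union (hm3.union hm4)),
      measure_union hd234 (hm3.union hm4), measure_union hd34 hm4, h1, h2, h3, h4]
    rw [show ((1:ℝ≥0∞)/4 + (1/4 + (1/4 + 1/4)) : ℝ≥0∞) = 4 * (1/4) by ring]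
    rw [ENNReal.mul_div_cancel' (by norm_num) (by norm_num)]
  have hcompl : μ ((s1 ∪ (s2 ∪ (s3 ∪ s4)))ᶜ) = 0 := by
    rw [measure_compl (hm1.union (hm2.union (hm3.union hm4))) (measure_ne_top μ _), hmeasU,
      measure_univ, tsub_self]
  refine measure_mono_null ?_ hcompl
  intro ω hω
  simp only [Set.mem_compl_iff, Set.mem_union, Set.mem_preimage, Set.mem_singleton_iff] at *
  tauto

lemma integral_sq_re_zero {Ω : Type*} [MeasurableSpace Ω] (μ : Measure Ω) [IsProbabilityMeasure μ]
    (Z : Ω → ℂ) (hZ : Measurable Z) (hu : IsUniformFourth μ Z) :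
    ∫ ω, ((Z ω) ^ 2).re ∂μ = 0 := by
  obtain ⟨h1, h2, h3, h4⟩ := hu
  obtain ⟨ne12, ne13, ne14, ne23, ne24, ne34⟩ := cvals
  set U := Z ⁻¹' {1, -1} with hU
  set V := Z ⁻¹' {Complex.I, -Complex.I} with hV
  have hmU : MeasurableSet U := hZ ((measurableSet_singleton _).insert 1)
  have hmV : MeasurableSet V := hZ ((measurableSet_singleton _).insert _)
  have hcongr : (fun ω => ((Z ω) ^ 2).re)
      =ᵐ[μ] fun ω => U.indicator (fun _ => (1:ℝ)) ω + V.indicator (fun _ => (-1:ℝ)) ω := by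
    filter_upwards [fourpt_ae μ Z hZ ⟨h1, h2, h3, h4⟩] with ω hω
    rcases hω with h | h | h | h
    · have hUm : ω ∈ U := by
        simp only [hU, Set.mem_preimage, Set.mem_insert_iff, Set.mem_singleton_iff, h]
        tauto
      have hVm : ω ∉ V := by
        simp only [hV, Set.mem_preimage, Set.mem_insert_iff, Set.mem_singleton_iff, h]
        push_neg
        exact ⟨ne13, ne14⟩
      simp only [Set.indicator_of_mem hUm, Set.indicator_of_notMem hVm, h]
      norm_num
    · have hUm : ω ∈ U := by
        simp only [hU, Set.mem_preimage, Set.mem_insert_iff, Set.mem_singleton_iff, h]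
        tauto
      have hVm : ω ∉ V := by
        simp only [hV, Set.mem_preimage, Set.mem_insert_iff, Set.mem_singleton_iff, h]
        push_neg
        exact ⟨ne23, ne24⟩
      simp only [Set.indicator_of_mem hUm, Set.indicator_of_notMem hVm, h]
      norm_num
    · have hUm : ω ∉ U := by
        simp only [hU, Set.mem_preimage, Set.mem_insert_iff, Set.mem_singleton_iff, h]
        push_neg
        exact ⟨ne13.symm, ne23.symm⟩
      have hVm : ω ∈ V := by
        simp only [hV, Set.mem_preimage, Set.mem_insert_iff, Set.mem_singleton_iff, h]
        tauto
      simp only [Set.indicator_of_notMem hUm, Set.indicator_of_mem hVm, h]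
      simp [Complex.I_sq]
    · have hUm : ω ∉ U := by
        simp only [hU, Set.mem_preimage, Set.mem_insert_iff, Set.mem_singleton_iff, h]
        push_neg
        exact ⟨ne14.symm, ne24.symm⟩
      have hVm : ω ∈ V := by
        simp only [hV, Set.mem_preimage, Set.mem_insert_iff, Set.mem_singleton_iff, h]
        tauto
      simp only [Set.indicator_of_notMem hUm, Set.indicator_of_mem hVm, h]
      simp [neg_sq, Complex.I_sq]
  rw [integral_congr_ae hcongr, integral_add
    ((integrable_const (1:ℝ)).indicator hmU) ((integrable_const (-1:ℝ)).indicator hmV),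
    integral_indicator_const _ hmU, integral_indicator_const _ hmV]
  have hUval : μ U = 2 / 4 := by
    have : U = Z ⁻¹' {1} ∪ Z ⁻¹' {-1} := by
      rw [hU, Set.insert_eq, Set.preimage_union]
    rw [this, measure_union (Disjoint.preimage Z (Set.disjoint_singleton.mpr ne12))
      (hZ (measurableSet_singleton _)), h1, h2]
    rw [ENNReal.div_add_div_same]
    norm_num
  have hVval : μ V = 2 / 4 := by
    have : V = Z ⁻¹' {Complex.I} ∪ Z ⁻¹' {-Complex.I} := by
      rw [hV, Set.insert_eq, Set.preimage_union]
    rw [this, measure_union (Disjoint.preimage Z (Set.disjoint_singleton.mpr ne34))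
      (hZ (measurableSet_singleton _)), h3, h4]
    rw [ENNReal.div_add_div_same]
    norm_num
  rw [measureReal_def, measureReal_def, hUval, hVval]
  simp


/-- The `i`-th row contribution. -/
noncomputable def rowY {Ω : Type*} {k d : ℕ} (A : Fin k → Fin d → Ω → ℂ)
    (x w : Fin d → ℝ) (i : Fin k) (ω : Ω) : ℝ :=
  ∑ j₁ : Fin d, ∑ j₂ : Fin d,
    if j₁ ≠ j₂ then
      ((A i j₁ ω) ^ 2 * (A i j₂ ω) ^ 2).re *
        ((w j₁) ^ 2 * (x j₂) ^ 2 + 2 * x j₁ * w j₁ * x j₂ * w j₂)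
    else 0

lemma Hfour_eq_sum_rowY {Ω : Type*} {k d : ℕ} (A : Fin k → Fin d → Ω → ℂ)
    (x w : Fin d → ℝ) (ω : Ω) : Hfour A x w ω = ∑ i : Fin k, rowY A x w i ω := rfl

/-- The sum of rows in `s` as a function of the entries indexed by `s ×ˢ univ`. -/
noncomputable def groupFun {k d : ℕ} (x w : Fin d → ℝ) (s : Finset (Fin k))
    (v : {p : Fin k × Fin d // p ∈ s ×ˢ (Finset.univ : Finset (Fin d))} → ℂ) : ℝ :=
  ∑ i ∈ s.attach, ∑ j₁ : Fin d, ∑ j₂ : Fin d,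
    if j₁ ≠ j₂ then
      ((v ⟨(i.1, j₁), Finset.mem_product.mpr ⟨i.2, Finset.mem_univ _⟩⟩) ^ 2 *
       (v ⟨(i.1, j₂), Finset.mem_product.mpr ⟨i.2, Finset.mem_univ _⟩⟩) ^ 2).re *
        ((w j₁) ^ 2 * (x j₂) ^ 2 + 2 * x j₁ * w j₁ * x j₂ * w j₂)
    else 0

lemma groupFun_measurable {k d : ℕ} (x w : Fin d → ℝ) (s : Finset (Fin k)) :
    Measurable (groupFun x w s) := by
  refine Finset.measurable_sum _ fun i _ => ?_
  refine Finset.measurable_sum _ fun j₁ _ => ?_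
  refine Finset.measurable_sum _ fun j₂ _ => ?_
  by_cases h : j₁ ≠ j₂
  · simp only [if_pos h]
    apply Measurable.mul_const
    apply Complex.measurable_re.comp
    exact Measurable.mul ((measurable_pi_apply _).pow_const 2)
      ((measurable_pi_apply _).pow_const 2)
  · simp only [if_neg h]
    exact measurable_const

lemma groupFun_comp {Ω : Type*} {k d : ℕ} (A : Fin k → Fin d → Ω → ℂ)
    (x w : Fin d → ℝ) (s : Finset (Fin k)) :
    (groupFun x w s ∘ fun (a : Ω) (i : {p : Fin k × Fin d // p ∈ s ×ˢ Finset.univ}) =>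
      A (i : Fin k × Fin d).1 (i : Fin k × Fin d).2 a) =
      fun ω => ∑ i ∈ s, rowY A x w i ω := by
  funext ω
  exact Finset.sum_attach s (fun i => rowY A x w i ω)

lemma indep_rows {Ω : Type*} [MeasurableSpace Ω] {μ : Measure Ω} {k d : ℕ}
    (A : Fin k → Fin d → Ω → ℂ) (hA : ∀ i j, Measurable (A i j))
    (hindep : iIndepFun (fun p : Fin k × Fin d => A p.1 p.2) μ)
    (x w : Fin d → ℝ) (s : Finset (Fin k)) (j : Fin k) (hj : j ∉ s) :
    IndepFun (fun ω => ∑ i ∈ s, rowY A x w i ω) (rowY A x w j) μ := by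
  classical
  have hdisj : Disjoint (s ×ˢ (Finset.univ : Finset (Fin d)))
      (({j} : Finset (Fin k)) ×ˢ (Finset.univ : Finset (Fin d))) := by
    rw [Finset.disjoint_left]
    rintro ⟨i, j'⟩ hp hq
    rw [Finset.mem_product] at hp hq
    rw [Finset.mem_singleton] at hq
    exact hj (hq.1 ▸ hp.1)
  have h := hindep.indepFun_finset (s ×ˢ Finset.univ) (({j} : Finset (Fin k)) ×ˢ Finset.univ)
    hdisj (fun p => hA p.1 p.2)
  have h2 := h.comp (groupFun_measurable x w s) (groupFun_measurable x w {j})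
  rw [groupFun_comp A x w s, groupFun_comp A x w {j}] at h2
  have : (fun ω => ∑ i ∈ ({j} : Finset (Fin k)), rowY A x w i ω) = rowY A x w j := by
    funext ω; exact Finset.sum_singleton _ _
  rwa [this] at h2

lemma main_bound {Ω : Type} [MeasurableSpace Ω] (μ : Measure Ω) [IsProbabilityMeasure μ]
    {k d : ℕ} (A : Fin k → Fin d → Ω → ℂ) (hA : ∀ i j, Measurable (A i j))
    (hunif : ∀ i j, IsUniformFourth μ (A i j))
    (hindep : iIndepFun (fun p : Fin k × Fin d => A p.1 p.2) μ)
    (x w : Fin d → ℝ) (hx : x ≠ 0) (hw : w ≠ 0) (t : ℝ) (ht : 0 < t) :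
    (μ {ω | t < |Hfour A x w ω|}).toReal ≤
      2 * Real.exp (-(t ^ 2) / (16 * k * ((∑ j, (x j) ^ 2) * (∑ j, (w j) ^ 2)) ^ 2)) := by
  classical
  obtain ⟨jx, hjx⟩ := Function.ne_iff.mp hx
  obtain ⟨jw, hjw⟩ := Function.ne_iff.mp hw
  set X : ℝ := ∑ j, (x j) ^ 2 with hXdef
  set W : ℝ := ∑ j, (w j) ^ 2 with hWdef
  set T : ℝ := ∑ j, (x j) ^ 2 * (w j) ^ 2 with hTdef
  have hXpos : 0 < X :=
    Finset.sum_pos' (fun j _ => sq_nonneg _)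
      ⟨jx, Finset.mem_univ _, lt_of_le_of_ne (sq_nonneg _) (Ne.symm (pow_ne_zero 2 hjx))⟩
  have hWpos : 0 < W :=
    Finset.sum_pos' (fun j _ => sq_nonneg _)
      ⟨jw, Finset.mem_univ _, lt_of_le_of_ne (sq_nonneg _) (Ne.symm (pow_ne_zero 2 hjw))⟩
  set a : ℝ := X * W with hadef
  have hapos : 0 < a := mul_pos hXpos hWpos
  have hT0 : 0 ≤ T := Finset.sum_nonneg fun j _ => mul_nonneg (sq_nonneg _) (sq_nonneg _)
  have hTa : T ≤ a := T_le x w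
  set A₀ : ℝ := -a - 3 * T with hA₀def
  set B₀ : ℝ := 3 * a - 3 * T with hB₀def
  have hA₀0 : A₀ ≤ 0 := by rw [hA₀def]; linarith
  have hB₀0 : 0 ≤ B₀ := by rw [hB₀def]; linarith
  have hRpos : 0 < B₀ - A₀ := by rw [hA₀def, hB₀def]; linarith
  have hReq : B₀ - A₀ = 4 * a := by rw [hA₀def, hB₀def]; ring
  -- almost sure goodness
  have hae : ∀ᵐ ω ∂μ, ∀ (i : Fin k) (j : Fin d),
      A i j ω = 1 ∨ A i j ω = -1 ∨ A i j ω = Complex.I ∨ A i j ω = -Complex.I := by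
    rw [ae_all_iff]
    intro i
    rw [ae_all_iff]
    intro j
    exact fourpt_ae μ (A i j) (hA i j) (hunif i j)
  -- row representation and bounds on the good set
  have hrow_rep : ∀ ω, (∀ (i : Fin k) (j : Fin d),
      A i j ω = 1 ∨ A i j ω = -1 ∨ A i j ω = Complex.I ∨ A i j ω = -Complex.I) →
      ∀ i, rowY A x w i ω = rowVal x w (fun j => ((A i j ω) ^ 2).re) ∧
        (∀ j, ((A i j ω) ^ 2).re = 1 ∨ ((A i j ω) ^ 2).re = -1) := by
    intro ω hω i
    have him : ∀ j, ((A i j ω) ^ 2).im = 0 := by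
      intro j
      rcases hω i j with h | h | h | h <;> rw [h] <;>
        simp [Complex.I_sq, neg_sq]
    constructor
    · unfold rowY rowVal
      refine Finset.sum_congr rfl fun j₁ _ => Finset.sum_congr rfl fun j₂ _ => ?_
      by_cases h : j₁ ≠ j₂
      · simp only [if_pos h]
        rw [Complex.mul_re, him j₁, him j₂]
        ring
      · simp only [if_neg h]
    · intro j
      rcases hω i j with h | h | h | h <;> rw [h] <;>
        simp [Complex.I_sq, neg_sq]
  have hrow_bdd : ∀ᵐ ω ∂μ, ∀ i, A₀ ≤ rowY A x w i ω ∧ rowY A x w i ω ≤ B₀ := by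
    filter_upwards [hae] with ω hω i
    obtain ⟨hrep, hval⟩ := hrow_rep ω hω i
    have := rowVal_bounds x w (fun j => ((A i j ω) ^ 2).re) hval
    rw [hrep, hA₀def, hB₀def]
    constructor <;> [linarith [this.1]; linarith [this.2]]
  have habs_bdd : ∀ᵐ ω ∂μ, ∀ i, |rowY A x w i ω| ≤ 4 * a := by
    filter_upwards [hrow_bdd] with ω hω i
    rw [abs_le]
    constructor
    · have := (hω i).1; rw [hA₀def] at this; linarith
    · have := (hω i).2; rw [hB₀def] at this; linarith
  -- measurability and integrability
  have hYmeas : ∀ i, Measurable (rowY A x w i) := by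
    intro i
    refine Finset.measurable_sum _ fun j₁ _ => Finset.measurable_sum _ fun j₂ _ => ?_
    by_cases h : j₁ ≠ j₂
    · simp only [if_pos h]
      apply Measurable.mul_const
      apply Complex.measurable_re.comp
      exact Measurable.mul ((hA i j₁).pow_const 2) ((hA i j₂).pow_const 2)
    · simp only [if_neg h]; exact measurable_const
  have hYint : ∀ i, Integrable (rowY A x w i) μ := by
    intro i
    refine Integrable.mono' (integrable_const (4 * a)) (hYmeas i).aestronglyMeasurable ?_
    filter_upwards [habs_bdd] with ω hω
    simpa [Real.norm_eq_abs] using hω i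
  -- mean zero
  have hEY : ∀ i, ∫ ω, rowY A x w i ω ∂μ = 0 := by
    intro i
    have hterm_int : ∀ j₁ j₂ : Fin d, Integrable (fun ω => if j₁ ≠ j₂ then
        ((A i j₁ ω) ^ 2 * (A i j₂ ω) ^ 2).re *
          ((w j₁) ^ 2 * (x j₂) ^ 2 + 2 * x j₁ * w j₁ * x j₂ * w j₂) else 0) μ := by
      intro j₁ j₂
      by_cases h : j₁ ≠ j₂
      · simp only [if_pos h]
        refine Integrable.mono' (integrable_const
          (|(w j₁) ^ 2 * (x j₂) ^ 2 + 2 * x j₁ * w j₁ * x j₂ * w j₂|)) ?_ ?_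
        · apply Measurable.aestronglyMeasurable
          apply Measurable.mul_const
          apply Complex.measurable_re.comp
          exact Measurable.mul ((hA i j₁).pow_const 2) ((hA i j₂).pow_const 2)
        · filter_upwards [hae] with ω hω
          rw [Real.norm_eq_abs, abs_mul]
          have h1 : |((A i j₁ ω) ^ 2 * (A i j₂ ω) ^ 2).re| ≤ 1 := by
            obtain ⟨_, hval⟩ := hrow_rep ω hω i
            have him : ∀ j, ((A i j ω) ^ 2).im = 0 := by
              intro j
              rcases hω i j with h' | h' | h' | h' <;> rw [h'] <;> simp [Complex.I_sq, neg_sq]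
            rw [Complex.mul_re, him j₁, him j₂, mul_zero, sub_zero, abs_mul]
            rcases hval j₁ with h' | h' <;> rcases hval j₂ with h'' | h'' <;>
              rw [h', h''] <;> norm_num
          nlinarith [abs_nonneg ((w j₁) ^ 2 * (x j₂) ^ 2 + 2 * x j₁ * w j₁ * x j₂ * w j₂),
            abs_nonneg (((A i j₁ ω) ^ 2 * (A i j₂ ω) ^ 2).re)]
      · simp only [if_neg h]
        exact integrable_const 0
    unfold rowY
    rw [integral_finset_sum _ (fun j₁ _ => integrable_finset_sum _ (fun j₂ _ => hterm_int j₁ j₂))]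
    refine Finset.sum_eq_zero fun j₁ _ => ?_
    rw [integral_finset_sum _ (fun j₂ _ => hterm_int j₁ j₂)]
    refine Finset.sum_eq_zero fun j₂ _ => ?_
    by_cases h : j₁ ≠ j₂
    · simp only [if_pos h]
      rw [integral_mul_const]
      have hprodre : (fun ω => ((A i j₁ ω) ^ 2 * (A i j₂ ω) ^ 2).re)
          =ᵐ[μ] (fun ω => ((A i j₁ ω) ^ 2).re * ((A i j₂ ω) ^ 2).re) := by
        filter_upwards [hae] with ω hω
        have him : ∀ j, ((A i j ω) ^ 2).im = 0 := by
          intro j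
          rcases hω i j with h' | h' | h' | h' <;> rw [h'] <;> simp [Complex.I_sq, neg_sq]
        rw [Complex.mul_re, him j₁, him j₂, mul_zero, sub_zero]
      have hne : ((i, j₁) : Fin k × Fin d) ≠ (i, j₂) := by
        intro hcon
        exact h (congrArg Prod.snd hcon)
      have hφ : Measurable (fun z : ℂ => (z ^ 2).re) :=
        Complex.measurable_re.comp (measurable_id.pow_const 2)
      have hIndep : IndepFun (fun ω => ((A i j₁ ω) ^ 2).re) (fun ω => ((A i j₂ ω) ^ 2).re) μ :=
        (hindep.indepFun hne).comp hφ hφ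
      have hmul := IndepFun.integral_mul_eq_mul_integral hIndep
        ((hφ.comp (hA i j₁)).aestronglyMeasurable) ((hφ.comp (hA i j₂)).aestronglyMeasurable)
      rw [integral_congr_ae hprodre]
      have : ∫ ω, ((A i j₁ ω) ^ 2).re * ((A i j₂ ω) ^ 2).re ∂μ
          = (∫ ω, ((A i j₁ ω) ^ 2).re ∂μ) * ∫ ω, ((A i j₂ ω) ^ 2).re ∂μ := hmul
      rw [this, integral_sq_re_zero μ (A i j₁) (hA i j₁) (hunif i j₁), zero_mul, zero_mul]
    · simp only [if_neg h, integral_zero]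
  -- integrability of exponentials of partial sums
  have hexp_int : ∀ (l : ℝ) (s : Finset (Fin k)),
      Integrable (fun ω => Real.exp (l * ∑ i ∈ s, rowY A x w i ω)) μ := by
    intro l s
    refine Integrable.mono' (integrable_const (Real.exp (|l| * (s.card * (4 * a)))))
      ((Real.measurable_exp.comp ((Finset.measurable_sum _
        (fun i _ => hYmeas i)).const_mul l)).aestronglyMeasurable) ?_
    filter_upwards [habs_bdd] with ω hω
    rw [Real.norm_eq_abs, Real.abs_exp, Real.exp_le_exp]
    have hsum : |∑ i ∈ s, rowY A x w i ω| ≤ s.card * (4 * a) := by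
      calc |∑ i ∈ s, rowY A x w i ω| ≤ ∑ i ∈ s, |rowY A x w i ω| :=
            Finset.abs_sum_le_sum_abs _ _
        _ ≤ ∑ _i ∈ s, 4 * a := Finset.sum_le_sum fun i _ => hω i
        _ = s.card * (4 * a) := by rw [Finset.sum_const, nsmul_eq_mul]
    calc l * ∑ i ∈ s, rowY A x w i ω ≤ |l * ∑ i ∈ s, rowY A x w i ω| := le_abs_self _
      _ = |l| * |∑ i ∈ s, rowY A x w i ω| := abs_mul _ _
      _ ≤ |l| * (s.card * (4 * a)) := by
          exact mul_le_mul_of_nonneg_left hsum (abs_nonneg _)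
  have hexp_int1 : ∀ (l : ℝ) (i : Fin k),
      Integrable (fun ω => Real.exp (l * rowY A x w i ω)) μ := by
    intro l i
    have := hexp_int l {i}
    simpa using this
  -- per-row mgf bound
  have hrowmgf : ∀ (i : Fin k) (l : ℝ),
      ∫ ω, Real.exp (l * rowY A x w i ω) ∂μ ≤ Real.exp (l ^ 2 * (4 * a) ^ 2 / 4) := by
    intro i l
    set EA := Real.exp (l * A₀) with hEA
    set EB := Real.exp (l * B₀) with hEB
    have hchord : ∀ᵐ ω ∂μ, Real.exp (l * rowY A x w i ω) ≤
        (B₀ * EA - A₀ * EB) / (B₀ - A₀) + rowY A x w i ω * ((EB - EA) / (B₀ - A₀)) := by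
      filter_upwards [hrow_bdd] with ω hω
      obtain ⟨hlb, hub⟩ := hω i
      set y := rowY A x w i ω with hy
      have hRne : B₀ - A₀ ≠ 0 := hRpos.ne'
      have hθ : 0 ≤ (B₀ - y) / (B₀ - A₀) := div_nonneg (by linarith) hRpos.le
      have hτ : 0 ≤ (y - A₀) / (B₀ - A₀) := div_nonneg (by linarith) hRpos.le
      have hsum1 : (B₀ - y) / (B₀ - A₀) + (y - A₀) / (B₀ - A₀) = 1 := by
        field_simp
        ring
      have hkey := convexOn_exp.2 (Set.mem_univ (l * A₀)) (Set.mem_univ (l * B₀)) hθ hτ hsum1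
      have harg : ((B₀ - y) / (B₀ - A₀)) • (l * A₀) + ((y - A₀) / (B₀ - A₀)) • (l * B₀) = l * y := by
        simp only [smul_eq_mul]
        field_simp
        ring
      rw [harg] at hkey
      calc Real.exp (l * y) ≤ ((B₀ - y) / (B₀ - A₀)) • Real.exp (l * A₀)
            + ((y - A₀) / (B₀ - A₀)) • Real.exp (l * B₀) := hkey
        _ = (B₀ * EA - A₀ * EB) / (B₀ - A₀) + y * ((EB - EA) / (B₀ - A₀)) := by
            simp only [smul_eq_mul, hEA, hEB]
            field_simp
            ring
    have hrhs_int : Integrable (fun ω => (B₀ * EA - A₀ * EB) / (B₀ - A₀)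
        + rowY A x w i ω * ((EB - EA) / (B₀ - A₀))) μ :=
      (integrable_const _).add ((hYint i).mul_const _)
    have hle := integral_mono_ae (hexp_int1 l i) hrhs_int hchord
    have hval : ∫ ω, ((B₀ * EA - A₀ * EB) / (B₀ - A₀)
        + rowY A x w i ω * ((EB - EA) / (B₀ - A₀))) ∂μ = (B₀ * EA - A₀ * EB) / (B₀ - A₀) := by
      rw [integral_add (integrable_const _) ((hYint i).mul_const _), integral_const,
        integral_mul_const, hEY i, zero_mul, add_zero]
      simp
    rw [hval] at hle
    refine hle.trans ((chord_bound A₀ B₀ l hA₀0 hB₀0 hRpos).trans (le_of_eq ?_))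
    rw [hReq]
  -- product bound over a finset of rows
  have hprod : ∀ (l : ℝ) (s : Finset (Fin k)),
      ∫ ω, Real.exp (l * ∑ i ∈ s, rowY A x w i ω) ∂μ
        ≤ Real.exp (s.card * (l ^ 2 * (4 * a) ^ 2 / 4)) := by
    intro l s
    induction s using Finset.induction_on with
    | empty => simp
    | @insert j s hj ih =>
      have hindYS : IndepFun (rowY A x w j) (fun ω => ∑ i ∈ s, rowY A x w i ω) μ :=
        (indep_rows A hA hindep x w s j hj).symm
      have hm : Measurable (fun y : ℝ => Real.exp (l * y)) :=
        Real.measurable_exp.comp (measurable_id.const_mul l)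
      have hie : IndepFun (fun ω => Real.exp (l * rowY A x w j ω))
          (fun ω => Real.exp (l * ∑ i ∈ s, rowY A x w i ω)) μ := hindYS.comp hm hm
      have heq : (fun ω => Real.exp (l * ∑ i ∈ insert j s, rowY A x w i ω))
          = fun ω => Real.exp (l * rowY A x w j ω)
              * Real.exp (l * ∑ i ∈ s, rowY A x w i ω) := by
        funext ω
        rw [Finset.sum_insert hj, mul_add, Real.exp_add]
      have hmulint := IndepFun.integral_mul_eq_mul_integral hie
        ((hm.comp (hYmeas j)).aestronglyMeasurable)
        ((hm.comp (Finset.measurable_sum _ (fun i _ => hYmeas i))).aestronglyMeasurable)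
      calc ∫ ω, Real.exp (l * ∑ i ∈ insert j s, rowY A x w i ω) ∂μ
          = ∫ ω, Real.exp (l * rowY A x w j ω)
              * Real.exp (l * ∑ i ∈ s, rowY A x w i ω) ∂μ := by rw [heq]
        _ = (∫ ω, Real.exp (l * rowY A x w j ω) ∂μ)
              * ∫ ω, Real.exp (l * ∑ i ∈ s, rowY A x w i ω) ∂μ := hmulint
        _ ≤ Real.exp (l ^ 2 * (4 * a) ^ 2 / 4) * Real.exp (s.card * (l ^ 2 * (4 * a) ^ 2 / 4)) := by
            refine mul_le_mul (hrowmgf j l) ih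
              (integral_nonneg fun ω => (Real.exp_pos _).le) (Real.exp_pos _).le
        _ = Real.exp ((insert j s).card * (l ^ 2 * (4 * a) ^ 2 / 4)) := by
            rw [← Real.exp_add, Finset.card_insert_of_notMem hj]
            push_cast
            ring_nf
  -- Chernoff
  rcases Nat.eq_zero_or_pos k with hk | hk
  · subst hk
    have hH0 : ∀ ω, Hfour A x w ω = 0 := by
      intro ω
      rw [Hfour_eq_sum_rowY]
      simp
    have : {ω | t < |Hfour A x w ω|} = ∅ := by
      ext ω
      simp [hH0 ω, abs_of_nonneg, ht, not_lt.mpr ht.le]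
    rw [this]
    simp only [measure_empty, ENNReal.toReal_zero]
    positivity
  · have hkpos : (0:ℝ) < k := by exact_mod_cast hk
    set l₀ : ℝ := t / (8 * k * a ^ 2) with hl₀def
    have hl₀pos : 0 < l₀ := div_pos ht (by positivity)
    have hHmeas : Measurable (Hfour A x w) := by
      have : Hfour A x w = fun ω => ∑ i, rowY A x w i ω := funext fun ω => Hfour_eq_sum_rowY ..
      rw [this]
      exact Finset.measurable_sum _ fun i _ => hYmeas i
    have hHsum : Hfour A x w = fun ω => ∑ i : Fin k, rowY A x w i ω :=
      funext fun ω => Hfour_eq_sum_rowY ..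
    have hmgfH : ∀ l : ℝ, mgf (Hfour A x w) μ l ≤ Real.exp (k * (l ^ 2 * (4 * a) ^ 2 / 4)) := by
      intro l
      have : mgf (Hfour A x w) μ l = ∫ ω, Real.exp (l * ∑ i : Fin k, rowY A x w i ω) ∂μ := by
        rw [mgf, hHsum]
      rw [this]
      have := hprod l Finset.univ
      rwa [Finset.card_univ, Fintype.card_fin] at this
    have hexponent : Real.exp (-l₀ * t) * Real.exp (k * (l₀ ^ 2 * (4 * a) ^ 2 / 4))
        = Real.exp (-(t ^ 2) / (16 * k * a ^ 2)) := by
      rw [← Real.exp_add]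
      congr 1
      rw [hl₀def]
      field_simp
      ring
    have hside1 : (μ {ω | t ≤ Hfour A x w ω}).toReal
        ≤ Real.exp (-(t ^ 2) / (16 * k * a ^ 2)) := by
      have hint : Integrable (fun ω => Real.exp (l₀ * Hfour A x w ω)) μ := by
        have h' := hexp_int l₀ Finset.univ
        refine h'.congr (Filter.Eventually.of_forall fun ω => ?_)
        rw [hHsum]
      have := measure_ge_le_exp_mul_mgf (X := Hfour A x w) (μ := μ) t hl₀pos.le hint
      refine this.trans ?_
      rw [← hexponent]
      exact mul_le_mul_of_nonneg_left (hmgfH l₀) (Real.exp_pos _).le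
    have hside2 : (μ {ω | t ≤ -Hfour A x w ω}).toReal
        ≤ Real.exp (-(t ^ 2) / (16 * k * a ^ 2)) := by
      have hint : Integrable (fun ω => Real.exp (l₀ * (-Hfour A x w ω))) μ := by
        have h' := hexp_int (-l₀) Finset.univ
        refine h'.congr (Filter.Eventually.of_forall fun ω => ?_)
        rw [hHsum]
        ring_nf
      have := measure_ge_le_exp_mul_mgf (X := fun ω => -Hfour A x w ω) (μ := μ) t hl₀pos.le hint
      refine this.trans ?_
      have hmgfneg : mgf (fun ω => -Hfour A x w ω) μ l₀
          ≤ Real.exp (k * (l₀ ^ 2 * (4 * a) ^ 2 / 4)) := by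
        have h1 : mgf (fun ω => -Hfour A x w ω) μ l₀ = mgf (Hfour A x w) μ (-l₀) := by
          rw [mgf, mgf]
          congr 1
          funext ω
          ring_nf
        rw [h1]
        simpa [neg_sq] using hmgfH (-l₀)
      calc Real.exp (-l₀ * t) * mgf (fun ω => -Hfour A x w ω) μ l₀
          ≤ Real.exp (-l₀ * t) * Real.exp (k * (l₀ ^ 2 * (4 * a) ^ 2 / 4)) :=
            mul_le_mul_of_nonneg_left hmgfneg (Real.exp_pos _).le
        _ = Real.exp (-(t ^ 2) / (16 * k * a ^ 2)) := hexponent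
    have hincl : {ω | t < |Hfour A x w ω|} ⊆
        {ω | t ≤ Hfour A x w ω} ∪ {ω | t ≤ -Hfour A x w ω} := by
      intro ω hω
      rw [Set.mem_setOf_eq, lt_abs] at hω
      rcases hω with h | h
      · exact Or.inl (le_of_lt h)
      · exact Or.inr (le_of_lt h)
    have hmeasle : μ {ω | t < |Hfour A x w ω|}
        ≤ μ {ω | t ≤ Hfour A x w ω} + μ {ω | t ≤ -Hfour A x w ω} :=
      le_trans (measure_mono hincl) (measure_union_le _ _)
    calc (μ {ω | t < |Hfour A x w ω|}).toReal
        ≤ (μ {ω | t ≤ Hfour A x w ω} + μ {ω | t ≤ -Hfour A x w ω}).toReal :=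
          ENNReal.toReal_mono (ENNReal.add_ne_top.mpr ⟨measure_ne_top μ _, measure_ne_top μ _⟩)
            hmeasle
      _ = (μ {ω | t ≤ Hfour A x w ω}).toReal + (μ {ω | t ≤ -Hfour A x w ω}).toReal :=
          ENNReal.toReal_add (measure_ne_top μ _) (measure_ne_top μ _)
      _ ≤ Real.exp (-(t ^ 2) / (16 * k * a ^ 2)) + Real.exp (-(t ^ 2) / (16 * k * a ^ 2)) :=
          add_le_add hside1 hside2
      _ = 2 * Real.exp (-(t ^ 2) / (16 * k * (X * W) ^ 2)) := by
          rw [hadef]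
          ring

/-- there is a universal constant `C > 0` such that for a random `k×d` matrix
with i.i.d. entries uniform on `{1, -1, i, -i}` and any nonzero `x, w ∈ ℝ^d`, for all `t > 0`,
`P[|H₄| > t] ≤ C exp(-t²/(16 k ‖w‖₂⁴ ‖x‖₂⁴))`. -/
theorem stmt_9 :
    ∃ C : ℝ, 0 < C ∧
      ∀ (Ω : Type) (_ : MeasurableSpace Ω) (μ : Measure Ω), IsProbabilityMeasure μ →
      ∀ (k d : ℕ) (A : Fin k → Fin d → Ω → ℂ),
        (∀ i j, Measurable (A i j)) →
        (∀ i j, IsUniformFourth μ (A i j)) →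
        iIndepFun (fun p : Fin k × Fin d => A p.1 p.2) μ →
      ∀ (x w : Fin d → ℝ), x ≠ 0 → w ≠ 0 →
      ∀ t : ℝ, 0 < t →
        (μ {ω | t < |Hfour A x w ω|}).toReal ≤
          C * Real.exp (-(t ^ 2) /
            (16 * k * Real.sqrt (∑ j, (w j) ^ 2) ^ 4 * Real.sqrt (∑ j, (x j) ^ 2) ^ 4)) := by
  refine ⟨2, by norm_num, ?_⟩
  intro Ω mΩ μ hμ k d A hA hunif hindep x w hx hw t ht
  haveI := hμ
  have hmain := main_bound μ A hA hunif hindep x w hx hw t ht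
  have hWnn : (0:ℝ) ≤ ∑ j, (w j) ^ 2 := Finset.sum_nonneg fun j _ => sq_nonneg _
  have hXnn : (0:ℝ) ≤ ∑ j, (x j) ^ 2 := Finset.sum_nonneg fun j _ => sq_nonneg _
  have e1 : Real.sqrt (∑ j, (w j) ^ 2) ^ 4 = (∑ j, (w j) ^ 2) ^ 2 := by
    rw [show (4:ℕ) = 2 * 2 from rfl, pow_mul, Real.sq_sqrt hWnn]
  have e2 : Real.sqrt (∑ j, (x j) ^ 2) ^ 4 = (∑ j, (x j) ^ 2) ^ 2 := by
    rw [show (4:ℕ) = 2 * 2 from rfl, pow_mul, Real.sq_sqrt hXnn]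
  rw [e1, e2]
  refine hmain.trans (le_of_eq ?_)
  congr 2
  ring
end

section
/- Let h_1,…,h_d be complex random variables, each uniform on {1, −1, i, −i} ⊂ ℂ, that are 4-wise independent (every subfamily of at most 4 of them is mutually independent). Then for any x, w ∈ ℝ^d: E[ (∑_{t=1}^d x_t h_t)² · (∑_{t=1}^d w_t h_t)² ] = ∑_{t=1}^d x_t² w_t², i.e., the expectation of this complex random variable equals the real number ‖x‖_w². -/
open MeasureTheory ProbabilityTheory
open scoped ENNReal

/-- A family of random variables is `m`-wise independent if every subfamily of at most `m`
of them is mutually independent. -/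
def KWiseIndep {Ω ι : Type*} [MeasurableSpace Ω] {β : Type*} [MeasurableSpace β]
    (m : ℕ) (f : ι → Ω → β) (μ : Measure Ω) : Prop :=
  ∀ s : Finset ι, s.card ≤ m →
    iIndepFun (fun i : s => f i) μ

section Aux

variable {Ω : Type*} [MeasurableSpace Ω] {μ : Measure Ω} [IsProbabilityMeasure μ] {Z : Ω → ℂ}

private lemma ne12 : (1:ℂ) ≠ -1 := by
  intro h
  have h2 : (2:ℂ) = 0 := by linear_combination h
  norm_num at h2
private lemma ne13 : (1:ℂ) ≠ Complex.I := by norm_num [Complex.ext_iff]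
private lemma ne14 : (1:ℂ) ≠ -Complex.I := by norm_num [Complex.ext_iff]
private lemma ne23 : (-1:ℂ) ≠ Complex.I := by norm_num [Complex.ext_iff]
private lemma ne24 : (-1:ℂ) ≠ -Complex.I := by norm_num [Complex.ext_iff]
private lemma ne34 : Complex.I ≠ -Complex.I := by norm_num [Complex.ext_iff]

lemma uf_ae_mem (hm : Measurable Z) (hu : IsUniformFourth μ Z) :
    ∀ᵐ ω ∂μ, Z ω ∈ ({1, -1, Complex.I, -Complex.I} : Set ℂ) := by
  obtain ⟨h1, h2, h3, h4⟩ := hu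
  have hSm : ∀ v : ℂ, MeasurableSet (Z ⁻¹' {v}) := fun v => hm (measurableSet_singleton v)
  have hdisj : ∀ v w : ℂ, v ≠ w → Disjoint (Z ⁻¹' {v}) (Z ⁻¹' {w}) := fun v w hvw =>
    Disjoint.preimage Z (by simp [hvw])
  have hU : Z ⁻¹' ({1, -1, Complex.I, -Complex.I} : Set ℂ) =
      Z ⁻¹' {1} ∪ (Z ⁻¹' {-1} ∪ (Z ⁻¹' {Complex.I} ∪ Z ⁻¹' {-Complex.I})) := by
    ext ω; simp [or_assoc]
  have d2 : Disjoint (Z ⁻¹' {Complex.I}) (Z ⁻¹' {-Complex.I}) := hdisj _ _ ne34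
  have d1 : Disjoint (Z ⁻¹' {-1}) (Z ⁻¹' {Complex.I} ∪ Z ⁻¹' {-Complex.I}) :=
    Set.disjoint_union_right.2 ⟨hdisj _ _ ne23, hdisj _ _ ne24⟩
  have d0 : Disjoint (Z ⁻¹' {1}) (Z ⁻¹' {-1} ∪ (Z ⁻¹' {Complex.I} ∪ Z ⁻¹' {-Complex.I})) :=
    Set.disjoint_union_right.2 ⟨hdisj _ _ ne12,
      Set.disjoint_union_right.2 ⟨hdisj _ _ ne13, hdisj _ _ ne14⟩⟩
  have hmeasU : μ (Z ⁻¹' ({1, -1, Complex.I, -Complex.I} : Set ℂ)) = 1 := by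
    rw [hU, measure_union d0 ((hSm _).union ((hSm _).union (hSm _))),
      measure_union d1 ((hSm _).union (hSm _)), measure_union d2 (hSm _), h1, h2, h3, h4]
    rw [one_div, show (4⁻¹ + (4⁻¹ + (4⁻¹ + 4⁻¹)) : ℝ≥0∞) = 4⁻¹ * 4 by ring]
    exact ENNReal.inv_mul_cancel (by norm_num) (by norm_num)
  have hSmeas : MeasurableSet ({1, -1, Complex.I, -Complex.I} : Set ℂ) := by
    measurability
  have hc : μ ((Z ⁻¹' ({1, -1, Complex.I, -Complex.I} : Set ℂ))ᶜ) = 0 := by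
    rw [measure_compl (hm hSmeas) (measure_ne_top μ _), hmeasU, measure_univ, tsub_self]
  rw [ae_iff]
  convert hc using 2
  rfl

lemma uf_ae_norm (hm : Measurable Z) (hu : IsUniformFourth μ Z) :
    ∀ᵐ ω ∂μ, ‖Z ω‖ = 1 := by
  filter_upwards [uf_ae_mem hm hu] with ω hω
  rcases hω with h | h | h | h <;> rw [h] <;> simp

lemma uf_moment (hm : Measurable Z) (hu : IsUniformFourth μ Z) (m : ℕ) :
    ∫ ω, (Z ω) ^ m ∂μ =
      ((1:ℂ) ^ m + (-1:ℂ) ^ m + Complex.I ^ m + (-Complex.I) ^ m) / 4 := by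
  obtain ⟨h1, h2, h3, h4⟩ := hu
  have hSm : ∀ v : ℂ, MeasurableSet (Z ⁻¹' {v}) := fun v => hm (measurableSet_singleton v)
  have hae : (fun ω => (Z ω) ^ m) =ᵐ[μ] (fun ω =>
      (Z ⁻¹' {1}).indicator (fun _ => (1:ℂ) ^ m) ω +
      ((Z ⁻¹' {-1}).indicator (fun _ => (-1:ℂ) ^ m) ω +
      ((Z ⁻¹' {Complex.I}).indicator (fun _ => Complex.I ^ m) ω +
       (Z ⁻¹' {-Complex.I}).indicator (fun _ => (-Complex.I) ^ m) ω))) := by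
    filter_upwards [uf_ae_mem hm ⟨h1, h2, h3, h4⟩] with ω hω
    simp only [Set.mem_insert_iff, Set.mem_singleton_iff] at hω
    rcases hω with h | h | h | h <;>
      simp [Set.indicator_apply, h, ne12, ne13, ne14, ne23, ne24, ne34,
        Ne.symm ne12, Ne.symm ne13, Ne.symm ne14, Ne.symm ne23, Ne.symm ne24, Ne.symm ne34]
  have hint : ∀ (v : ℂ) (c : ℂ), Integrable ((Z ⁻¹' {v}).indicator (fun _ => c)) μ :=
    fun v c => (integrable_const c).indicator (hSm v)
  rw [integral_congr_ae hae]
  have i1 : Integrable ((Z ⁻¹' {1}).indicator (fun _ => (1:ℂ) ^ m)) μ := hint _ _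
  have i2 : Integrable ((Z ⁻¹' {-1}).indicator (fun _ => (-1:ℂ) ^ m)) μ := hint _ _
  have i3 : Integrable ((Z ⁻¹' {Complex.I}).indicator (fun _ => Complex.I ^ m)) μ := hint _ _
  have i4 : Integrable ((Z ⁻¹' {-Complex.I}).indicator (fun _ => (-Complex.I) ^ m)) μ := hint _ _
  have i34 : Integrable (fun ω => (Z ⁻¹' {Complex.I}).indicator (fun _ => Complex.I ^ m) ω +
      (Z ⁻¹' {-Complex.I}).indicator (fun _ => (-Complex.I) ^ m) ω) μ := i3.add i4
  have i234 : Integrable (fun ω => (Z ⁻¹' {-1}).indicator (fun _ => (-1:ℂ) ^ m) ω +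
      ((Z ⁻¹' {Complex.I}).indicator (fun _ => Complex.I ^ m) ω +
       (Z ⁻¹' {-Complex.I}).indicator (fun _ => (-Complex.I) ^ m) ω)) μ := i2.add i34
  rw [integral_add i1 i234, integral_add i2 i34, integral_add i3 i4]
  rw [integral_indicator_const _ (hSm _), integral_indicator_const _ (hSm _),
    integral_indicator_const _ (hSm _), integral_indicator_const _ (hSm _),
    measureReal_def, measureReal_def, measureReal_def, measureReal_def, h1, h2, h3, h4]
  have : ((1:ℝ≥0∞) / 4).toReal = 1 / 4 := by
    rw [ENNReal.toReal_div]; norm_num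
  rw [this]
  simp only [Complex.real_smul]
  push_cast
  ring

lemma uf_moment_zero (hm : Measurable Z) (hu : IsUniformFourth μ Z) {k : ℕ}
    (hk1 : 1 ≤ k) (hk3 : k ≤ 3) : ∫ ω, (Z ω) ^ k ∂μ = 0 := by
  interval_cases k
  · rw [uf_moment hm hu]; ring
  · rw [uf_moment hm hu, neg_sq Complex.I, Complex.I_sq]; ring
  · rw [uf_moment hm hu]; ring

lemma uf_moment_four (hm : Measurable Z) (hu : IsUniformFourth μ Z) :
    ∫ ω, (Z ω) ^ 4 ∂μ = 1 := by
  rw [uf_moment hm hu, show ((-Complex.I) ^ 4 : ℂ) = Complex.I ^ 4 by ring,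
    Complex.I_pow_four]
  norm_num

lemma integrable_of_ae_norm_le {f : Ω → ℂ} (hf : AEStronglyMeasurable f μ) {C : ℝ}
    (hb : ∀ᵐ ω ∂μ, ‖f ω‖ ≤ C) : Integrable f μ :=
  Integrable.mono' (integrable_const C) hf hb

omit [IsProbabilityMeasure μ] in
lemma indepFun_integral_mul_complex {X Y : Ω → ℂ} (hXY : IndepFun X Y μ)
    (hX : Integrable X μ) (hY : Integrable Y μ) :
    ∫ ω, X ω * Y ω ∂μ = (∫ ω, X ω ∂μ) * ∫ ω, Y ω ∂μ := by
  have hXY' : Integrable (fun ω => X ω * Y ω) μ := hXY.integrable_mul hX hY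
  have mre : Measurable Complex.re := Complex.measurable_re
  have mim : Measurable Complex.im := Complex.measurable_im
  have hXr : Integrable (fun ω => (X ω).re) μ := hX.re
  have hXi : Integrable (fun ω => (X ω).im) μ := hX.im
  have hYr : Integrable (fun ω => (Y ω).re) μ := hY.re
  have hYi : Integrable (fun ω => (Y ω).im) μ := hY.im
  have irr : IndepFun (fun ω => (X ω).re) (fun ω => (Y ω).re) μ := hXY.comp mre mre
  have iri : IndepFun (fun ω => (X ω).re) (fun ω => (Y ω).im) μ := hXY.comp mre mim
  have iir : IndepFun (fun ω => (X ω).im) (fun ω => (Y ω).re) μ := hXY.comp mim mre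
  have iii : IndepFun (fun ω => (X ω).im) (fun ω => (Y ω).im) μ := hXY.comp mim mim
  have hrr : ∫ ω, (X ω).re * (Y ω).re ∂μ = (∫ ω, (X ω).re ∂μ) * ∫ ω, (Y ω).re ∂μ :=
    irr.integral_fun_mul_eq_mul_integral hXr.aestronglyMeasurable hYr.aestronglyMeasurable
  have hri : ∫ ω, (X ω).re * (Y ω).im ∂μ = (∫ ω, (X ω).re ∂μ) * ∫ ω, (Y ω).im ∂μ :=
    iri.integral_fun_mul_eq_mul_integral hXr.aestronglyMeasurable hYi.aestronglyMeasurable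
  have hir : ∫ ω, (X ω).im * (Y ω).re ∂μ = (∫ ω, (X ω).im ∂μ) * ∫ ω, (Y ω).re ∂μ :=
    iir.integral_fun_mul_eq_mul_integral hXi.aestronglyMeasurable hYr.aestronglyMeasurable
  have hii : ∫ ω, (X ω).im * (Y ω).im ∂μ = (∫ ω, (X ω).im ∂μ) * ∫ ω, (Y ω).im ∂μ :=
    iii.integral_fun_mul_eq_mul_integral hXi.aestronglyMeasurable hYi.aestronglyMeasurable
  have irri : Integrable (fun ω => (X ω).re * (Y ω).re) μ := irr.integrable_mul hXr hYr
  have irii : Integrable (fun ω => (X ω).re * (Y ω).im) μ := iri.integrable_mul hXr hYi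
  have iiri : Integrable (fun ω => (X ω).im * (Y ω).re) μ := iir.integrable_mul hXi hYr
  have iiii : Integrable (fun ω => (X ω).im * (Y ω).im) μ := iii.integrable_mul hXi hYi
  have eXr : ∫ ω, (X ω).re ∂μ = (∫ ω, X ω ∂μ).re := integral_re hX
  have eXi : ∫ ω, (X ω).im ∂μ = (∫ ω, X ω ∂μ).im := integral_im hX
  have eYr : ∫ ω, (Y ω).re ∂μ = (∫ ω, Y ω ∂μ).re := integral_re hY
  have eYi : ∫ ω, (Y ω).im ∂μ = (∫ ω, Y ω ∂μ).im := integral_im hY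
  have ePr : ∫ ω, (X ω * Y ω).re ∂μ = (∫ ω, X ω * Y ω ∂μ).re := integral_re hXY'
  have ePi : ∫ ω, (X ω * Y ω).im ∂μ = (∫ ω, X ω * Y ω ∂μ).im := integral_im hXY'
  apply Complex.ext
  · rw [Complex.mul_re, ← eXr, ← eXi, ← eYr, ← eYi, ← ePr]
    have : ∀ ω, (X ω * Y ω).re = (X ω).re * (Y ω).re - (X ω).im * (Y ω).im :=
      fun ω => Complex.mul_re _ _
    rw [integral_congr_ae (Filter.Eventually.of_forall this), integral_sub irri iiii,
      hrr, hii]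
  · rw [Complex.mul_im, ← eXr, ← eXi, ← eYr, ← eYi, ← ePi]
    have : ∀ ω, (X ω * Y ω).im = (X ω).re * (Y ω).im + (X ω).im * (Y ω).re :=
      fun ω => Complex.mul_im _ _
    rw [integral_congr_ae (Filter.Eventually.of_forall this), integral_add irii iiri,
      hri, hir]

/-- The expectation of a product `∏ j ∈ s, (h j) ^ (m j)` of powers of independent
uniform-fourth-root variables vanishes as soon as one exponent is between 1 and 3. -/
lemma key_prod_zero {d : ℕ} {h : Fin d → Ω → ℂ} (hmeas : ∀ t, Measurable (h t))
    (hunif : ∀ t, IsUniformFourth μ (h t))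
    (s : Finset (Fin d))
    (hInd : iIndepFun (fun i : s => h i) μ)
    (m : Fin d → ℕ) (a : Fin d) (haS : a ∈ s) (hma1 : 1 ≤ m a) (hma3 : m a ≤ 3) :
    ∫ ω, ∏ j ∈ s, (h j ω) ^ (m j) ∂μ = 0 := by
  classical
  set j₀ : {y // y ∈ s} := (⟨a, haS⟩ : {y // y ∈ s}) with hj₀
  have hIndF : iIndepFun
      (fun (j : s) => fun ω => (h j ω) ^ (m j)) μ := by
    have := hInd.comp (fun (j : s) => fun z : ℂ => z ^ (m j))
      (fun j => measurable_id.pow_const _)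
    exact this
  have hFmeas : ∀ j : s, Measurable (fun ω => (h j ω) ^ (m j)) :=
    fun j => ((hmeas j).pow_const _)
  have hIndep2 : IndepFun (∏ j ∈ Finset.univ.erase j₀, fun ω => (h (j : Fin d) ω) ^ (m j))
      (fun ω => (h a ω) ^ (m a)) μ :=
    hIndF.indepFun_finsetProd_of_notMem hFmeas (Finset.notMem_erase _ _)
  have hPiEq : (∏ j ∈ Finset.univ.erase j₀, fun ω => (h (j : Fin d) ω) ^ (m j))
      = fun ω => ∏ j ∈ Finset.univ.erase j₀, (h (j : Fin d) ω) ^ (m j) :=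
    funext fun ω => Finset.prod_apply ω _ _
  rw [hPiEq] at hIndep2
  have hprod : (fun ω => ∏ j ∈ s, (h j ω) ^ (m j))
      = fun ω => (∏ j ∈ Finset.univ.erase j₀, (h (j : Fin d) ω) ^ (m j)) * (h a ω) ^ (m a) := by
    funext ω
    rw [← Finset.prod_coe_sort s (fun j => (h j ω) ^ (m j)),
      ← Finset.mul_prod_erase Finset.univ _ (Finset.mem_univ j₀)]
    exact mul_comm _ _
  rw [hprod]
  have hnorm : ∀ t : Fin d, ∀ᵐ ω ∂μ, ‖h t ω‖ = 1 :=
    fun t => uf_ae_norm (hmeas t) (hunif t)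
  have hallnorm : ∀ᵐ ω ∂μ, ∀ t : Fin d, ‖h t ω‖ = 1 := ae_all_iff.2 hnorm
  have hIntProd : Integrable
      (fun ω => ∏ j ∈ Finset.univ.erase j₀, (h (j : Fin d) ω) ^ (m j)) μ := by
    apply integrable_of_ae_norm_le
      (Finset.measurable_prod _ (fun j _ => hFmeas j)).aestronglyMeasurable (C := 1)
    filter_upwards [hallnorm] with ω hω
    rw [norm_prod]
    have : ∀ j ∈ Finset.univ.erase j₀, ‖(h (j : Fin d) ω) ^ (m j)‖ = 1 := by
      intro j _; rw [norm_pow, hω, one_pow]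
    rw [Finset.prod_congr rfl this, Finset.prod_const_one]
  have hIntPow : Integrable (fun ω => (h a ω) ^ (m a)) μ := by
    apply integrable_of_ae_norm_le ((hmeas a).pow_const _).aestronglyMeasurable (C := 1)
    filter_upwards [hnorm a] with ω hω
    rw [norm_pow, hω, one_pow]
  rw [indepFun_integral_mul_complex hIndep2 hIntProd hIntPow,
    uf_moment_zero (hmeas a) (hunif a) hma1 hma3, mul_zero]

/-- The fourth mixed moment of 4-wise independent uniform fourth-root variables. -/
lemma four_moment {d : ℕ} {h : Fin d → Ω → ℂ} (hmeas : ∀ t, Measurable (h t))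
    (hunif : ∀ t, IsUniformFourth μ (h t)) (hindep : KWiseIndep 4 h μ)
    (a b c e : Fin d) :
    ∫ ω, h a ω * h b ω * h c ω * h e ω ∂μ =
      if b = a ∧ c = a ∧ e = a then 1 else 0 := by
  classical
  by_cases hall : b = a ∧ c = a ∧ e = a
  · obtain ⟨rfl, rfl, rfl⟩ := hall
    rw [if_pos ⟨rfl, rfl, rfl⟩]
    simp only [show ∀ z : ℂ, z * z * z * z = z ^ 4 from fun z => by ring]
    exact uf_moment_four (hmeas _) (hunif _)
  · rw [if_neg hall]
    have hprod : (fun ω => h a ω * h b ω * h c ω * h e ω)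
        = fun ω => ∏ j ∈ Finset.image ![a,b,c,e] Finset.univ,
            (h j ω) ^ ((Finset.univ.filter (fun i => ![a,b,c,e] i = j)).card) := by
      funext ω
      rw [show h a ω * h b ω * h c ω * h e ω = ∏ i : Fin 4, h (![a,b,c,e] i) ω by
        rw [Fin.prod_univ_four]; simp]
      exact Finset.prod_comp (fun j => h j ω) ![a,b,c,e]
    rw [hprod]
    have hcard : (Finset.image ![a,b,c,e] Finset.univ).card ≤ 4 :=
      le_trans Finset.card_image_le (by simp)
    have haS : a ∈ Finset.image ![a,b,c,e] Finset.univ :=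
      Finset.mem_image.2 ⟨0, Finset.mem_univ _, rfl⟩
    have hex : ∃ i : Fin 4, ![a,b,c,e] i ≠ a := by
      by_contra hco
      push_neg at hco
      refine hall ⟨?_, ?_, ?_⟩
      · have := hco 1; simpa using this
      · have := hco 2; simpa using this
      · have := hco 3; simpa using this
    obtain ⟨i, hi⟩ := hex
    have hma3 : (Finset.univ.filter (fun i => ![a,b,c,e] i = a)).card ≤ 3 := by
      have hlt : (Finset.univ.filter (fun i => ![a,b,c,e] i = a)).card < 4 := by
        have hss : Finset.univ.filter (fun i => ![a,b,c,e] i = a) ⊂ Finset.univ := by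
          rw [Finset.ssubset_univ_iff]
          intro hEq
          have hmem : i ∈ Finset.univ.filter (fun i' => ![a,b,c,e] i' = a) := by
            rw [hEq]; exact Finset.mem_univ i
          exact hi (Finset.mem_filter.1 hmem).2
        have := Finset.card_lt_card hss
        simpa using this
      omega
    have hma1 : 1 ≤ (Finset.univ.filter (fun i => ![a,b,c,e] i = a)).card := by
      have h0 : (0 : Fin 4) ∈ Finset.univ.filter (fun i => ![a,b,c,e] i = a) := by
        simp
      exact Finset.card_pos.2 ⟨0, h0⟩
    exact key_prod_zero hmeas hunif _ (hindep _ hcard) _ a haS hma1 hma3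

end Aux

/-- for 4-wise independent hash values `h t`, each uniform on
`{1, -1, i, -i}`, the estimator is unbiased:
`E[(∑ t x_t h_t)² (∑ t w_t h_t)²] = ∑ t x_t² w_t² = ‖x‖_w²`. -/
theorem stmt_14 (Ω : Type*) [MeasurableSpace Ω] (μ : Measure Ω) [IsProbabilityMeasure μ]
    (d : ℕ) (h : Fin d → Ω → ℂ)
    (hmeas : ∀ t, Measurable (h t))
    (hunif : ∀ t, IsUniformFourth μ (h t))
    (hindep : KWiseIndep 4 h μ)
    (x w : Fin d → ℝ) :
    (∫ ω, (∑ t, (x t : ℂ) * h t ω) ^ 2 * (∑ t, (w t : ℂ) * h t ω) ^ 2 ∂μ) =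
      ((∑ t, (x t) ^ 2 * (w t) ^ 2 : ℝ) : ℂ) := by
  classical
  have hnorm : ∀ t : Fin d, ∀ᵐ ω ∂μ, ‖h t ω‖ = 1 :=
    fun t => uf_ae_norm (hmeas t) (hunif t)
  have hallnorm : ∀ᵐ ω ∂μ, ∀ t : Fin d, ‖h t ω‖ = 1 := ae_all_iff.2 hnorm
  have hint4 : ∀ p q r t : Fin d, Integrable (fun ω => h p ω * h q ω * h r ω * h t ω) μ := by
    intro p q r t
    apply integrable_of_ae_norm_le
      ((((hmeas p).mul (hmeas q)).mul (hmeas r)).mul (hmeas t)).aestronglyMeasurable (C := 1)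
    filter_upwards [hallnorm] with ω hω
    simp [hω]
  have hexp : (fun ω => (∑ t, (x t:ℂ) * h t ω) ^ 2 * (∑ t, (w t:ℂ) * h t ω) ^ 2)
      = fun ω => ∑ a, ∑ c, ∑ b, ∑ e, ((x a : ℂ) * x b * w c * w e) *
          (h a ω * h b ω * h c ω * h e ω) := by
    funext ω
    simp only [sq, Finset.sum_mul_sum]
    refine Finset.sum_congr rfl fun a _ => Finset.sum_congr rfl fun c _ =>
      Finset.sum_congr rfl fun b _ => Finset.sum_congr rfl fun e _ => by ring
  rw [hexp]
  have step1 : (∫ ω, ∑ a, ∑ c, ∑ b, ∑ e, ((x a : ℂ) * x b * w c * w e) *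
      (h a ω * h b ω * h c ω * h e ω) ∂μ)
      = ∑ a, ∑ c, ∑ b, ∑ e, ((x a : ℂ) * x b * w c * w e) *
        ∫ ω, h a ω * h b ω * h c ω * h e ω ∂μ := by
    rw [integral_finset_sum _ (fun a _ => integrable_finset_sum _ (fun c _ =>
      integrable_finset_sum _ (fun b _ => integrable_finset_sum _ (fun e _ =>
        (hint4 a b c e).const_mul _))))]
    refine Finset.sum_congr rfl fun a _ => ?_
    rw [integral_finset_sum _ (fun c _ => integrable_finset_sum _ (fun b _ =>
      integrable_finset_sum _ (fun e _ => (hint4 a b c e).const_mul _)))]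
    refine Finset.sum_congr rfl fun c _ => ?_
    rw [integral_finset_sum _ (fun b _ => integrable_finset_sum _ (fun e _ =>
      (hint4 a b c e).const_mul _))]
    refine Finset.sum_congr rfl fun b _ => ?_
    rw [integral_finset_sum _ (fun e _ => (hint4 a b c e).const_mul _)]
    refine Finset.sum_congr rfl fun e _ => ?_
    exact integral_const_mul _ _
  rw [step1]
  have step2 : ∀ a b c e : Fin d, ((x a : ℂ) * x b * w c * w e) *
      ∫ ω, h a ω * h b ω * h c ω * h e ω ∂μ
      = if e = a ∧ b = a ∧ c = a then (x a : ℂ) * x b * w c * w e else 0 := by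
    intro a b c e
    rw [four_moment hmeas hunif hindep a b c e]
    by_cases h1 : b = a ∧ c = a ∧ e = a
    · rw [if_pos h1, if_pos ⟨h1.2.2, h1.1, h1.2.1⟩, mul_one]
    · rw [if_neg h1, if_neg (fun hc => h1 ⟨hc.2.1, hc.2.2, hc.1⟩), mul_zero]
  simp only [step2]
  simp only [ite_and, Finset.sum_ite_eq', Finset.mem_univ, if_true]
  push_cast
  refine Finset.sum_congr rfl fun a _ => by ring
end

section
/- For any x, w ∈ ℝ^d: ∑_{(j_1,j_2,j_3)∈I'_{3,d}} ( w_{j_1}² x_{j_2} x_{j_3} + 4 w_{j_1} x_{j_1} w_{j_2} x_{j_3} + x_{j_1}² w_{j_2} w_{j_3} )² ≤ 36 ‖w‖₂⁴ ‖x‖₂⁴. -/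
/-- for any `x, w ∈ ℝ^d`, summing over triples of pairwise distinct indices,
`∑ (w_{j₁}² x_{j₂} x_{j₃} + 4 w_{j₁} x_{j₁} w_{j₂} x_{j₃} + x_{j₁}² w_{j₂} w_{j₃})²
  ≤ 36 ‖w‖₂⁴ ‖x‖₂⁴`. -/
theorem stmt_17 (d : ℕ) (x w : Fin d → ℝ) :
    (∑ j₁ : Fin d, ∑ j₂ : Fin d, ∑ j₃ : Fin d,
      if j₁ ≠ j₂ ∧ j₁ ≠ j₃ ∧ j₂ ≠ j₃ then
        ((w j₁) ^ 2 * x j₂ * x j₃ + 4 * w j₁ * x j₁ * w j₂ * x j₃ +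
          (x j₁) ^ 2 * w j₂ * w j₃) ^ 2
      else 0) ≤
      36 * Real.sqrt (∑ j, (w j) ^ 2) ^ 4 * Real.sqrt (∑ j, (x j) ^ 2) ^ 4 := by
  set W := ∑ j, (w j) ^ 2 with hWdef
  set X := ∑ j, (x j) ^ 2 with hXdef
  have hW : 0 ≤ W := Finset.sum_nonneg fun j _ => sq_nonneg _
  have hX : 0 ≤ X := Finset.sum_nonneg fun j _ => sq_nonneg _
  have hsqrtW : Real.sqrt W ^ 4 = W ^ 2 := by
    rw [show (4 : ℕ) = 2 * 2 from rfl, pow_mul, Real.sq_sqrt hW]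
  have hsqrtX : Real.sqrt X ^ 4 = X ^ 2 := by
    rw [show (4 : ℕ) = 2 * 2 from rfl, pow_mul, Real.sq_sqrt hX]
  rw [hsqrtW, hsqrtX]
  -- per-term bound
  have per : ∀ a b c : ℝ, (a + 4 * b + c) ^ 2 ≤ 6 * (a ^ 2 + 4 * b ^ 2 + c ^ 2) := by
    intro a b c
    nlinarith [sq_nonneg (a - b), sq_nonneg (b - c), sq_nonneg (a - c)]
  -- triple-sum factorization
  have key : ∀ (a b c : Fin d → ℝ),
      (∑ j₁, ∑ j₂, ∑ j₃, a j₁ * b j₂ * c j₃) =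
        (∑ j, a j) * (∑ j, b j) * (∑ j, c j) := by
    intro a b c
    rw [Finset.sum_mul_sum, Finset.sum_mul]
    refine Finset.sum_congr rfl fun j₁ _ => ?_
    rw [Finset.sum_mul]
    refine Finset.sum_congr rfl fun j₂ _ => ?_
    rw [Finset.mul_sum]
  -- diagonal bound
  have diag : ∀ (a b : Fin d → ℝ), (∀ j, 0 ≤ a j) → (∀ j, 0 ≤ b j) →
      (∑ j, a j * b j) ≤ (∑ j, a j) * (∑ j, b j) := by
    intro a b ha hb
    rw [Finset.sum_mul_sum]
    apply Finset.sum_le_sum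
    intro i _
    exact Finset.single_le_sum (f := fun j => a i * b j)
      (fun j _ => mul_nonneg (ha i) (hb j)) (Finset.mem_univ i)
  have step1 : (∑ j₁ : Fin d, ∑ j₂ : Fin d, ∑ j₃ : Fin d,
      if j₁ ≠ j₂ ∧ j₁ ≠ j₃ ∧ j₂ ≠ j₃ then
        ((w j₁) ^ 2 * x j₂ * x j₃ + 4 * w j₁ * x j₁ * w j₂ * x j₃ +
          (x j₁) ^ 2 * w j₂ * w j₃) ^ 2
      else 0) ≤
      ∑ j₁ : Fin d, ∑ j₂ : Fin d, ∑ j₃ : Fin d,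
        (6 * (w j₁ ^ 4) * (x j₂ ^ 2) * (x j₃ ^ 2)
          + 24 * (w j₁ ^ 2 * x j₁ ^ 2) * (w j₂ ^ 2) * (x j₃ ^ 2)
          + 6 * (x j₁ ^ 4) * (w j₂ ^ 2) * (w j₃ ^ 2)) := by
    refine Finset.sum_le_sum fun j₁ _ => Finset.sum_le_sum fun j₂ _ =>
      Finset.sum_le_sum fun j₃ _ => ?_
    have hb := per ((w j₁) ^ 2 * x j₂ * x j₃) (w j₁ * x j₁ * w j₂ * x j₃)
      ((x j₁) ^ 2 * w j₂ * w j₃)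
    split
    · calc ((w j₁) ^ 2 * x j₂ * x j₃ + 4 * w j₁ * x j₁ * w j₂ * x j₃ +
          (x j₁) ^ 2 * w j₂ * w j₃) ^ 2
          ≤ 6 * (((w j₁) ^ 2 * x j₂ * x j₃) ^ 2 + 4 * (w j₁ * x j₁ * w j₂ * x j₃) ^ 2 +
              ((x j₁) ^ 2 * w j₂ * w j₃) ^ 2) := by
            convert hb using 2; ring
        _ = 6 * (w j₁ ^ 4) * (x j₂ ^ 2) * (x j₃ ^ 2)
              + 24 * (w j₁ ^ 2 * x j₁ ^ 2) * (w j₂ ^ 2) * (x j₃ ^ 2)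
              + 6 * (x j₁ ^ 4) * (w j₂ ^ 2) * (w j₃ ^ 2) := by ring
    · positivity
  refine step1.trans ?_
  have expand : (∑ j₁ : Fin d, ∑ j₂ : Fin d, ∑ j₃ : Fin d,
      (6 * (w j₁ ^ 4) * (x j₂ ^ 2) * (x j₃ ^ 2)
        + 24 * (w j₁ ^ 2 * x j₁ ^ 2) * (w j₂ ^ 2) * (x j₃ ^ 2)
        + 6 * (x j₁ ^ 4) * (w j₂ ^ 2) * (w j₃ ^ 2)))
      = (∑ j, 6 * w j ^ 4) * X * X
        + (∑ j, 24 * (w j ^ 2 * x j ^ 2)) * W * X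
        + (∑ j, 6 * x j ^ 4) * W * W := by
    rw [← key (fun j => 6 * w j ^ 4) (fun j => x j ^ 2) (fun j => x j ^ 2),
        ← key (fun j => 24 * (w j ^ 2 * x j ^ 2)) (fun j => w j ^ 2) (fun j => x j ^ 2),
        ← key (fun j => 6 * x j ^ 4) (fun j => w j ^ 2) (fun j => w j ^ 2),
        ← Finset.sum_add_distrib, ← Finset.sum_add_distrib]
    refine Finset.sum_congr rfl fun j₁ _ => ?_
    rw [← Finset.sum_add_distrib, ← Finset.sum_add_distrib]
    refine Finset.sum_congr rfl fun j₂ _ => ?_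
    rw [← Finset.sum_add_distrib, ← Finset.sum_add_distrib]
  rw [expand]
  have hA : (∑ j, w j ^ 4) ≤ W * W := by
    have := diag (fun j => w j ^ 2) (fun j => w j ^ 2)
      (fun j => sq_nonneg _) (fun j => sq_nonneg _)
    calc (∑ j, w j ^ 4) = ∑ j, w j ^ 2 * w j ^ 2 := by
          refine Finset.sum_congr rfl fun j _ => by ring
      _ ≤ W * W := this
  have hB : (∑ j, w j ^ 2 * x j ^ 2) ≤ W * X :=
    diag (fun j => w j ^ 2) (fun j => x j ^ 2) (fun j => sq_nonneg _) (fun j => sq_nonneg _)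
  have hC : (∑ j, x j ^ 4) ≤ X * X := by
    have := diag (fun j => x j ^ 2) (fun j => x j ^ 2)
      (fun j => sq_nonneg _) (fun j => sq_nonneg _)
    calc (∑ j, x j ^ 4) = ∑ j, x j ^ 2 * x j ^ 2 := by
          refine Finset.sum_congr rfl fun j _ => by ring
      _ ≤ X * X := this
  have e1 : (∑ j, 6 * w j ^ 4) = 6 * ∑ j, w j ^ 4 := by rw [Finset.mul_sum]
  have e2 : (∑ j, 24 * (w j ^ 2 * x j ^ 2)) = 24 * ∑ j, w j ^ 2 * x j ^ 2 := by
    rw [Finset.mul_sum]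
  have e3 : (∑ j, 6 * x j ^ 4) = 6 * ∑ j, x j ^ 4 := by rw [Finset.mul_sum]
  rw [e1, e2, e3]
  nlinarith [sq_nonneg W, sq_nonneg X, mul_nonneg hW hX, sq_nonneg (W*X),
    mul_nonneg (mul_nonneg hW hW) (mul_nonneg hX hX)]
end
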